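/- arXiv:1909.13771 — 4 statements merged into one kernel-verified Lean document; each statement's English description precedes it below -/
import Mathlib

section
/- Let 0 ≤ t ≤ 3/8 and let ν_t be the left-down measure with parameter t on ℤ². Then ν_t-almost surely, every connected component of the random open subgraph is finite. -/
open MeasureTheory ProbabilityTheory

namespace OneIndep

variable {V : Type*}

/-- The configuration space of a bond percolation model on `G`: each edge of `G` is
either open (`true`) or closed (`false`). A configuration is identified with the
spanning subgraph consisting of its open edges. -/
abbrev Config (G : SimpleGraph V) : Type _ := G.edgeSet → Bool

/-- The set of endpoints of edges belonging to an edge set `F`. -/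
def endpointsOf (F : Set (Sym2 V)) : Set V := {v | ∃ e ∈ F, v ∈ e}

/-- Two edge sets are `k`-distant in `G` if they are disjoint and every walk in `G` from an
endpoint of an edge of `F₁` to an endpoint of an edge of `F₂` has length at least `k`.
For `k = 1` this says precisely that `F₁` and `F₂` are disjoint and no edge of `F₁` shares
an endpoint with an edge of `F₂`. -/
def KDistant (G : SimpleGraph V) (k : ℕ) (F₁ F₂ : Set (Sym2 V)) : Prop :=
  Disjoint F₁ F₂ ∧
    ∀ u ∈ endpointsOf F₁, ∀ v ∈ endpointsOf F₂, ∀ w : G.Walk u v, k ≤ w.length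

/-- The sub-σ-algebra of the configuration space generated by the states of the edges
belonging to `F`. -/
def cylinderSigma (G : SimpleGraph V) (F : Set (Sym2 V)) : MeasurableSpace (Config G) :=
  MeasurableSpace.comap (fun ω (e : {e : G.edgeSet // (e : Sym2 V) ∈ F}) => ω e) inferInstance

/-- A measure on the configuration space of `G` is `k`-independent if the states of any two
`k`-distant edge sets are independent. -/
def KIndepMeasure (G : SimpleGraph V) (k : ℕ) (μ : Measure (Config G)) : Prop :=
  ∀ F₁ F₂ : Set (Sym2 V), F₁ ⊆ G.edgeSet → F₂ ⊆ G.edgeSet → KDistant G k F₁ F₂ →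
    Indep (cylinderSigma G F₁) (cylinderSigma G F₂) μ

/-- `MGe G k p` is the collection of `k`-independent bond percolation measures on `G` in which
every edge is open with probability at least `p`. -/
def MGe (G : SimpleGraph V) (k : ℕ) (p : ℝ) : Set (Measure (Config G)) :=
  {μ | IsProbabilityMeasure μ ∧ KIndepMeasure G k μ ∧
    ∀ e : G.edgeSet, ENNReal.ofReal p ≤ μ {ω | ω e = true}}

/-- `MLe G k p` is the collection of `k`-independent bond percolation measures on `G` in which
every edge is open with probability at most `p`. -/
def MLe (G : SimpleGraph V) (k : ℕ) (p : ℝ) : Set (Measure (Config G)) :=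
  {μ | IsProbabilityMeasure μ ∧ KIndepMeasure G k μ ∧
    ∀ e : G.edgeSet, μ {ω | ω e = true} ≤ ENNReal.ofReal p}

/-- The spanning subgraph of `G` consisting of the open edges of the configuration `ω`. -/
def openSubgraph (G : SimpleGraph V) (ω : Config G) : SimpleGraph V :=
  SimpleGraph.fromEdgeSet {e | ∃ h : e ∈ G.edgeSet, ω ⟨e, h⟩ = true}

/-- Percolation: the open subgraph contains an infinite connected component. -/
def Percolates (G : SimpleGraph V) (ω : Config G) : Prop :=
  ∃ v : V, {w | (openSubgraph G ω).Reachable v w}.Infinite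

/-- The Harris critical probability for 1-independent percolation on `G`. -/
noncomputable def harrisCrit (G : SimpleGraph V) : ℝ :=
  sInf {p | p ∈ Set.Icc (0:ℝ) 1 ∧ ∀ μ ∈ MGe G 1 p, μ {ω | Percolates G ω} = 1}

/-- The open subgraph contains a path of length `n`. -/
def HasOpenPathOfLength (G : SimpleGraph V) (ω : Config G) (n : ℕ) : Prop :=
  ∃ (u v : V) (w : (openSubgraph G ω).Walk u v), w.IsPath ∧ w.length = n

/-- The long paths critical probability for 1-independent percolation on `G`. -/
noncomputable def longPathsCrit (G : SimpleGraph V) : ℝ :=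
  sInf {p | p ∈ Set.Icc (0:ℝ) 1 ∧
    ∀ μ ∈ MGe G 1 p, ∀ n : ℕ, 0 < μ {ω | HasOpenPathOfLength G ω n}}

/-- The `k`-independent connectivity function `f_{k,G}(p)`: the infimum over all
`k`-independent measures with edge-probability at least `p` of the probability that the
random spanning subgraph is connected. -/
noncomputable def connFun (G : SimpleGraph V) (k : ℕ) (p : ℝ) : ℝ :=
  sInf {x | ∃ μ ∈ MGe G k p, x = (μ {ω | (openSubgraph G ω).Connected}).toReal}

/-- The maximal `k`-independent connectivity function `F_{k,G}(p)`: the supremum over all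
`k`-independent measures with edge-probability at most `p` of the probability that the
random spanning subgraph is connected. -/
noncomputable def connFunMax (G : SimpleGraph V) (k : ℕ) (p : ℝ) : ℝ :=
  sSup {x | ∃ μ ∈ MLe G k p, x = (μ {ω | (openSubgraph G ω).Connected}).toReal}

/-- The line lattice `ℤ`: the two-way infinite path. -/
def lineLattice : SimpleGraph ℤ := SimpleGraph.fromRel (fun x y => y = x + 1)

/-- The hypercubic lattice `ℤ^d`. -/
def hypercubicLattice (d : ℕ) : SimpleGraph (Fin d → ℤ) :=
  SimpleGraph.fromRel (fun x y => ∑ i, (x i - y i).natAbs = 1)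

/-- The square lattice `ℤ²`. -/
def squareLattice : SimpleGraph (ℤ × ℤ) :=
  SimpleGraph.fromRel (fun x y => (x.1 - y.1).natAbs + (x.2 - y.2).natAbs = 1)


/-- Vertex states for the left-down measure: `0 = L`, `1 = D`, `2 = Off`. -/
abbrev LDState : Type := Fin 3

/-- A measure `ν` on state configurations of `ℤ²` is the left-down measure with parameter
`t` if it is a probability measure under which the vertex states are i.i.d., each vertex
being in state `L` with probability `t`, state `D` with probability `t` and state `Off`
with probability `1 - 2t` (expressed via cylinder events). -/
def IsLeftDownMeasure (t : ℝ) (ν : Measure ((ℤ × ℤ) → LDState)) : Prop :=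
  IsProbabilityMeasure ν ∧ ∀ (s : Finset (ℤ × ℤ)) (f : (ℤ × ℤ) → LDState),
    ν {σ | ∀ v ∈ s, σ v = f v} =
      ∏ v ∈ s, (if f v = 2 then ENNReal.ofReal (1 - 2 * t) else ENNReal.ofReal t)

/-- The open subgraph of `ℤ²` determined by a left-down state configuration: if a vertex is
in state `L` (`0`) the edge to its left is open, if it is in state `D` (`1`) the edge below
it is open; all other edges are closed. -/
def leftDownSubgraph (σ : (ℤ × ℤ) → LDState) : SimpleGraph (ℤ × ℤ) :=
  SimpleGraph.fromRel (fun u v =>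
    (σ u = 0 ∧ v = (u.1 - 1, u.2)) ∨ (σ u = 1 ∧ v = (u.1, u.2 - 1)))

open scoped ENNReal

namespace LDAux

/-- Direction vector for a state bit. -/
def eDir (b : Bool) : ℤ × ℤ := if b then (0, 1) else (1, 0)

/-- State for a bit. -/
def stOf (b : Bool) : LDState := if b then 1 else 0

/-- Decoded vertex sequence of a code. -/
def pv (v : ℤ × ℤ) (k : ℕ) (b : ℕ → Bool) : ℕ → ℤ × ℤ
  | 0 => v
  | i + 1 => if i < k then pv v k b i - eDir (b i) else pv v k b i + eDir (b i)

/-- Decoded sequence of determining vertices of a code. -/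
def dv (v : ℤ × ℤ) (k : ℕ) (b : ℕ → Bool) (i : ℕ) : ℤ × ℤ :=
  if i < k then pv v k b i else pv v k b (i + 1)

/-- Cylinder-type event associated with a code. -/
def cyl (v : ℤ × ℤ) (n k : ℕ) (b : ℕ → Bool) : Set ((ℤ × ℤ) → LDState) :=
  {σ | Set.InjOn (dv v k b) (Set.Iio n) ∧ ∀ i < n, σ (dv v k b i) = stOf (b i)}

lemma pv_congr {v k b b'} (i : ℕ) (hb : ∀ j < i, b j = b' j) :
    pv v k b i = pv v k b' i := by
  induction i with
  | zero => rfl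
  | succ i ih =>
      have h1 : pv v k b i = pv v k b' i := ih (fun j hj => hb j (Nat.lt_succ_of_lt hj))
      simp only [pv, h1, hb i (Nat.lt_succ_self i)]

lemma dv_congr {v k b b'} {n : ℕ} (i : ℕ) (hi : i < n) (hb : ∀ j < n, b j = b' j) :
    dv v k b i = dv v k b' i := by
  unfold dv
  rcases lt_or_ge i k with h | h
  · rw [if_pos h, if_pos h, pv_congr i (fun j hj => hb j (by omega))]
  · rw [if_neg (not_lt.2 h), if_neg (not_lt.2 h),
      pv_congr (i+1) (fun j hj => hb j (by omega))]

lemma cyl_congr {v n k b b'} (hb : ∀ j < n, b j = b' j) :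
    cyl v n k b = cyl v n k b' := by
  unfold cyl
  have hd : ∀ i < n, dv v k b i = dv v k b' i := fun i hi => dv_congr i hi hb
  ext σ
  constructor
  · rintro ⟨h1, h2⟩
    refine ⟨fun i hi j hj hij => h1 hi hj ?_, fun i hi => ?_⟩
    · rwa [hd i hi, hd j hj]
    · rw [← hd i hi, h2 i hi, hb i hi]
  · rintro ⟨h1, h2⟩
    refine ⟨fun i hi j hj hij => h1 hi hj ?_, fun i hi => ?_⟩
    · rwa [← hd i hi, ← hd j hj]
    · rw [hd i hi, h2 i hi, hb i hi]

lemma stOf_ne_two (b : Bool) : stOf b ≠ 2 := by cases b <;> decide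

/-- The measure of a cylinder event is at most `t ^ n`. -/
lemma cyl_measure_le {t : ℝ} (ν : Measure ((ℤ × ℤ) → LDState))
    (hν : IsLeftDownMeasure t ν) (v : ℤ × ℤ) (n k : ℕ) (b : ℕ → Bool) :
    ν (cyl v n k b) ≤ ENNReal.ofReal t ^ n := by
  by_cases hinj : Set.InjOn (dv v k b) (Set.Iio n)
  · set g := dv v k b with hg
    set F : (ℤ × ℤ) → LDState :=
      fun u => stOf (b (Function.invFunOn g (Set.Iio n) u)) with hF
    have hinv : ∀ i < n, Function.invFunOn g (Set.Iio n) (g i) = i := by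
      intro i hi
      exact hinj (Function.invFunOn_apply_mem (f := g) (s := Set.Iio n) hi)
        hi (Function.invFunOn_apply_eq (f := g) hi)
    have hFg : ∀ i < n, F (g i) = stOf (b i) := by
      intro i hi; rw [hF]; simp only; rw [hinv i hi]
    have hset : cyl v n k b = {σ | ∀ u ∈ (Finset.range n).image g, σ u = F u} := by
      ext σ
      constructor
      · rintro ⟨-, h2⟩ u hu
        simp only [Finset.mem_image, Finset.mem_range] at hu
        obtain ⟨i, hi, rfl⟩ := hu
        rw [h2 i hi, hFg i hi]
      · intro h
        refine ⟨hinj, fun i hi => ?_⟩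
        rw [← hFg i hi]
        exact h (g i) (Finset.mem_image.2 ⟨i, Finset.mem_range.2 hi, rfl⟩)
    rw [hset, hν.2]
    have hcard : ((Finset.range n).image g).card = n := by
      rw [Finset.card_image_of_injOn (by rwa [Finset.coe_range]), Finset.card_range]
    calc ∏ u ∈ (Finset.range n).image g,
          (if F u = 2 then ENNReal.ofReal (1 - 2 * t) else ENNReal.ofReal t)
        = ∏ u ∈ (Finset.range n).image g, ENNReal.ofReal t := by
          apply Finset.prod_congr rfl
          intro u hu
          rw [if_neg]
          simp only [Finset.mem_image, Finset.mem_range] at hu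
          obtain ⟨i, hi, rfl⟩ := hu
          rw [hFg i hi]
          exact stOf_ne_two _
      _ = ENNReal.ofReal t ^ n := by rw [Finset.prod_const, hcard]
      _ ≤ ENNReal.ofReal t ^ n := le_rfl
  · have : cyl v n k b = ∅ := by
      ext σ; simp only [cyl, Set.mem_setOf_eq, Set.mem_empty_iff_false, iff_false]
      rintro ⟨h1, -⟩; exact hinj h1
    simp [this]

lemma getVert_injOn' {W : Type*} {G : SimpleGraph W} {u v : W} {p : G.Walk u v}
    (hp : p.IsPath) : ∀ i ≤ p.length, ∀ j ≤ p.length, p.getVert i = p.getVert j → i = j := by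
  induction p with
  | nil => intro i hi j hj _; simp at hi hj; omega
  | cons h q ih =>
      rw [SimpleGraph.Walk.cons_isPath_iff] at hp
      intro i hi j hj hij
      match i, j with
      | 0, 0 => rfl
      | 0, (m+1) =>
          exfalso
          apply hp.2
          rw [SimpleGraph.Walk.mem_support_iff_exists_getVert]
          refine ⟨m, ?_, ?_⟩
          · simpa [SimpleGraph.Walk.getVert_cons_succ] using hij.symm
          · simp [SimpleGraph.Walk.length_cons] at hj; omega
      | (m+1), 0 =>
          exfalso
          apply hp.2
          rw [SimpleGraph.Walk.mem_support_iff_exists_getVert]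
          refine ⟨m, ?_, ?_⟩
          · simpa [SimpleGraph.Walk.getVert_cons_succ] using hij
          · simp [SimpleGraph.Walk.length_cons] at hi; omega
      | (m+1), (l+1) =>
          have := ih hp.1 m (by simp [SimpleGraph.Walk.length_cons] at hi; omega)
            l (by simp [SimpleGraph.Walk.length_cons] at hj; omega)
            (by simpa [SimpleGraph.Walk.getVert_cons_succ] using hij)
          omega

/-- Adjacent vertices in the left-down subgraph are at ℓ₁ distance 1. -/
lemma adj_dist {σ : (ℤ × ℤ) → LDState} {a c : ℤ × ℤ}
    (h : (leftDownSubgraph σ).Adj a c) :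
    (a.1 - c.1).natAbs + (a.2 - c.2).natAbs = 1 := by
  unfold leftDownSubgraph at h
  rw [SimpleGraph.fromRel_adj] at h
  obtain ⟨hne, h | h⟩ := h <;>
    rcases h with ⟨-, h⟩ | ⟨-, h⟩ <;>
      · have h1 := congrArg Prod.fst h
        have h2 := congrArg Prod.snd h
        simp at h1 h2
        omega

lemma walk_length_ge {σ : (ℤ × ℤ) → LDState} {a c : ℤ × ℤ}
    (w : (leftDownSubgraph σ).Walk a c) :
    (a.1 - c.1).natAbs + (a.2 - c.2).natAbs ≤ w.length := by
  induction w with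
  | nil => simp
  | @cons a b c h p ih =>
      have := adj_dist h
      rw [SimpleGraph.Walk.length_cons]
      omega

/-- An infinite cluster contains arbitrarily long self-avoiding paths. -/
lemma exists_long_path (σ : (ℤ × ℤ) → LDState) (v : ℤ × ℤ) (n : ℕ)
    (hinf : {w | (leftDownSubgraph σ).Reachable v w}.Infinite) :
    ∃ (x : ℤ × ℤ) (w : (leftDownSubgraph σ).Walk v x), w.IsPath ∧ n ≤ w.length := by
  have hball : ({w : ℤ × ℤ | (v.1 - w.1).natAbs + (v.2 - w.2).natAbs ≤ n}).Finite := by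
    apply Set.Finite.subset ((Set.finite_Icc (v.1 - n) (v.1 + n)).prod
      (Set.finite_Icc (v.2 - n) (v.2 + n)))
    intro w hw
    simp only [Set.mem_setOf_eq] at hw
    constructor <;> simp only [Set.mem_Icc] <;> omega
  obtain ⟨x, hx, hxb⟩ := (hinf.diff hball).nonempty
  obtain ⟨w⟩ := hx
  refine ⟨x, w.bypass, w.bypass_isPath, ?_⟩
  have := walk_length_ge w.bypass
  simp only [Set.mem_setOf_eq] at hxb
  omega

/-- Every open self-avoiding path is encoded by some code. -/
lemma exists_code (σ : (ℤ × ℤ) → LDState) {v x : ℤ × ℤ}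
    (w : (leftDownSubgraph σ).Walk v x) (hw : w.IsPath) (n : ℕ) (hn : n ≤ w.length) :
    ∃ k ≤ n, ∃ b : ℕ → Bool, σ ∈ cyl v n k b := by
  classical
  set u : ℕ → ℤ × ℤ := w.getVert with hu
  have huinj := getVert_injOn' hw
  set P : ℕ → Prop := fun i =>
    (σ (u i) = 0 ∧ u (i+1) = ((u i).1 - 1, (u i).2)) ∨
    (σ (u i) = 1 ∧ u (i+1) = ((u i).1, (u i).2 - 1)) with hPdef
  set Q : ℕ → Prop := fun i =>
    (σ (u (i+1)) = 0 ∧ u i = ((u (i+1)).1 - 1, (u (i+1)).2)) ∨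
    (σ (u (i+1)) = 1 ∧ u i = ((u (i+1)).1, (u (i+1)).2 - 1)) with hQdef
  have hPQ : ∀ i < n, P i ∨ Q i := by
    intro i hi
    have hadj := w.adj_getVert_succ (lt_of_lt_of_le hi hn)
    unfold leftDownSubgraph at hadj
    rw [SimpleGraph.fromRel_adj] at hadj
    exact hadj.2
  have hmono : ∀ i, i + 1 < n → ¬ P i → ¬ P (i+1) := by
    intro i hi hnp hpi1
    have hq : Q i := (hPQ i (by omega)).resolve_left hnp
    have hne : u i ≠ u (i+2) := by
      intro h
      have := huinj i (by omega) (i+2) (by omega) h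
      omega
    rcases hq with ⟨h0, he⟩ | ⟨h0, he⟩ <;> rcases hpi1 with ⟨h0', he'⟩ | ⟨h0', he'⟩
    · exact hne (he.trans he'.symm)
    · rw [h0] at h0'; exact absurd h0' (by decide)
    · rw [h0] at h0'; exact absurd h0' (by decide)
    · exact hne (he.trans he'.symm)
  obtain ⟨k, hkn, hiff⟩ : ∃ k ≤ n, ∀ i < n, (i < k ↔ P i) := by
    by_cases hex : ∃ i, i < n ∧ ¬ P i
    · refine ⟨Nat.find hex, ?_, ?_⟩
      · have := (Nat.find_spec hex).1; omega
      · intro i hi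
        constructor
        · intro hik
          by_contra hnp
          have := Nat.find_min' hex ⟨hi, hnp⟩
          omega
        · intro hp
          by_contra hik
          push_neg at hik
          have key : ∀ j, Nat.find hex ≤ j → j < n → ¬ P j := by
            intro j hj
            induction j, hj using Nat.le_induction with
            | base => intro _; exact (Nat.find_spec hex).2
            | succ j hj ih => intro hjn; exact hmono j hjn (ih (by omega))
          exact key i hik hi hp
    · push_neg at hex
      exact ⟨n, le_rfl, fun i hi => ⟨fun _ => hex i hi, fun _ => hi⟩⟩
  set b : ℕ → Bool := fun i => decide (σ (u (if i < k then i else i + 1)) = 1) with hb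
  have hQ' : ∀ i < n, ¬ i < k → Q i :=
    fun i hi hik => (hPQ i hi).resolve_left (fun hp => hik ((hiff i hi).2 hp))
  have hpv : ∀ i ≤ n, pv v k b i = u i := by
    intro i hi
    induction i with
    | zero => simp [pv, hu, SimpleGraph.Walk.getVert_zero]
    | succ i ih =>
        have hin : i < n := by omega
        have hui := ih (by omega)
        by_cases hik : i < k
        · have hp := (hiff i hin).1 hik
          rcases hp with ⟨h0, he⟩ | ⟨h0, he⟩
          · have hbi : b i = false := by simp [hb, if_pos hik, h0]
            rw [pv, if_pos hik, hui, hbi, he]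
            simp [eDir, Prod.ext_iff]
          · have hbi : b i = true := by simp [hb, if_pos hik, h0]
            rw [pv, if_pos hik, hui, hbi, he]
            simp [eDir, Prod.ext_iff]
        · have hq := hQ' i hin hik
          rcases hq with ⟨h0, he⟩ | ⟨h0, he⟩
          · have hbi : b i = false := by simp [hb, if_neg hik, h0]
            rw [pv, if_neg hik, hui, hbi]
            have h1 := congrArg Prod.fst he
            have h2 := congrArg Prod.snd he
            simp only [] at h1 h2
            simp [eDir, Prod.ext_iff]
            omega
          · have hbi : b i = true := by simp [hb, if_neg hik, h0]
            rw [pv, if_neg hik, hui, hbi]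
            have h1 := congrArg Prod.fst he
            have h2 := congrArg Prod.snd he
            simp only [] at h1 h2
            simp [eDir, Prod.ext_iff]
            omega
  have hdv : ∀ i < n, dv v k b i = u (if i < k then i else i + 1) := by
    intro i hi
    by_cases hik : i < k
    · rw [dv, if_pos hik, if_pos hik, hpv i (by omega)]
    · rw [dv, if_neg hik, if_neg hik, hpv (i+1) (by omega)]
  refine ⟨k, hkn, b, ?_, ?_⟩
  · intro i hi j hj hij
    simp only [Set.mem_Iio] at hi hj
    rw [hdv i hi, hdv j hj] at hij
    by_cases hik : i < k <;> by_cases hjk : j < k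
    · rw [if_pos hik, if_pos hjk] at hij
      exact huinj i (by omega) j (by omega) hij
    · rw [if_pos hik, if_neg hjk] at hij
      have := huinj i (by omega) (j+1) (by omega) hij
      omega
    · rw [if_neg hik, if_pos hjk] at hij
      have := huinj (i+1) (by omega) j (by omega) hij
      omega
    · rw [if_neg hik, if_neg hjk] at hij
      have := huinj (i+1) (by omega) (j+1) (by omega) hij
      omega
  · intro i hi
    rw [hdv i hi]
    by_cases hik : i < k
    · rw [if_pos hik]
      rcases (hiff i hi).1 hik with ⟨h0, -⟩ | ⟨h0, -⟩ <;>
        simp [hb, stOf, if_pos hik, h0]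
    · rw [if_neg hik]
      rcases hQ' i hi hik with ⟨h0, -⟩ | ⟨h0, -⟩ <;>
        simp [hb, stOf, if_neg hik, h0]

/-- The infinite-cluster event is covered by the (finitely many) cylinder events. -/
lemma event_subset (v : ℤ × ℤ) (n : ℕ) :
    {σ | {w | (leftDownSubgraph σ).Reachable v w}.Infinite} ⊆
      ⋃ (k : Fin (n+1)) (b : Fin n → Bool),
        cyl v n k (fun i => if h : i < n then b ⟨i, h⟩ else false) := by
  intro σ hσ
  obtain ⟨x, w, hw, hlen⟩ := exists_long_path σ v n hσ
  obtain ⟨k, hkn, b, hb⟩ := exists_code σ w hw n hlen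
  refine Set.mem_iUnion.2 ⟨⟨k, by omega⟩, Set.mem_iUnion.2 ⟨fun i => b i, ?_⟩⟩
  have hc : cyl v n k b
      = cyl v n (⟨k, by omega⟩ : Fin (n+1)).1
          (fun i => if h : i < n then b (⟨i, h⟩ : Fin n).1 else false) := by
    apply cyl_congr
    intro j hj
    simp [hj]
  exact hc ▸ hb

/-- Union bound for the infinite-cluster event. -/
lemma measure_event_le {t : ℝ} (ν : Measure ((ℤ × ℤ) → LDState))
    (hν : IsLeftDownMeasure t ν) (v : ℤ × ℤ) (n : ℕ) :
    ν {σ | {w | (leftDownSubgraph σ).Reachable v w}.Infinite} ≤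
      ((n+1 : ℕ) : ℝ≥0∞) * 2 ^ n * ENNReal.ofReal t ^ n := by
  classical
  calc ν {σ | {w | (leftDownSubgraph σ).Reachable v w}.Infinite}
      ≤ ν (⋃ (k : Fin (n+1)) (b : Fin n → Bool),
          cyl v n k (fun i => if h : i < n then b ⟨i, h⟩ else false)) :=
        measure_mono (event_subset v n)
    _ ≤ ∑' (k : Fin (n+1)), ν (⋃ (b : Fin n → Bool),
          cyl v n k (fun i => if h : i < n then b ⟨i, h⟩ else false)) :=
        measure_iUnion_le _
    _ ≤ ∑' (k : Fin (n+1)), ∑' (b : Fin n → Bool),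
          ν (cyl v n k (fun i => if h : i < n then b ⟨i, h⟩ else false)) :=
        ENNReal.tsum_le_tsum (fun k => measure_iUnion_le _)
    _ ≤ ∑' (_ : Fin (n+1)), ∑' (_ : Fin n → Bool), ENNReal.ofReal t ^ n :=
        ENNReal.tsum_le_tsum (fun k => ENNReal.tsum_le_tsum
          (fun b => cyl_measure_le ν hν v n k _))
    _ = ((n+1 : ℕ) : ℝ≥0∞) * 2 ^ n * ENNReal.ofReal t ^ n := by
        rw [tsum_fintype, tsum_fintype]
        simp only [Finset.sum_const, Finset.card_univ, Fintype.card_fun,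
          Fintype.card_fin, Fintype.card_bool, smul_eq_mul, nsmul_eq_mul]
        push_cast
        ring

/-- The infinite-cluster event at a fixed vertex is null. -/
lemma measure_event_zero {t : ℝ} (ht0 : 0 ≤ t) (ht : t ≤ 3 / 8)
    (ν : Measure ((ℤ × ℤ) → LDState)) (hν : IsLeftDownMeasure t ν) (v : ℤ × ℤ) :
    ν {σ | {w | (leftDownSubgraph σ).Reachable v w}.Infinite} = 0 := by
  have key : ∀ n : ℕ,
      ν {σ | {w | (leftDownSubgraph σ).Reachable v w}.Infinite}
        ≤ ENNReal.ofReal (((n:ℝ)+1) * (3/4)^n) := by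
    intro n
    refine (measure_event_le ν hν v n).trans ?_
    calc ((n+1 : ℕ) : ℝ≥0∞) * 2 ^ n * ENNReal.ofReal t ^ n
        = ENNReal.ofReal (((n+1:ℕ):ℝ)) * ENNReal.ofReal 2 ^ n
            * ENNReal.ofReal t ^ n := by
          rw [ENNReal.ofReal_natCast]
          norm_num
      _ = ENNReal.ofReal (((n+1:ℕ):ℝ) * 2 ^ n * t ^ n) := by
          rw [← ENNReal.ofReal_pow (by norm_num : (0:ℝ) ≤ 2),
            ← ENNReal.ofReal_pow ht0,
            ← ENNReal.ofReal_mul (by positivity),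
            ← ENNReal.ofReal_mul (by positivity)]
      _ ≤ ENNReal.ofReal (((n:ℝ)+1) * (3/4)^n) := by
          apply ENNReal.ofReal_le_ofReal
          push_cast
          rw [mul_assoc, ← mul_pow]
          apply mul_le_mul_of_nonneg_left _ (by positivity)
          exact pow_le_pow_left₀ (by positivity) (by linarith) n
  have htend : Filter.Tendsto
      (fun n : ℕ => ENNReal.ofReal (((n:ℝ)+1) * (3/4)^n)) Filter.atTop (nhds 0) := by
    have hreal : Filter.Tendsto (fun n : ℕ => ((n:ℝ)+1) * (3/4)^n)
        Filter.atTop (nhds 0) := by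
      have h1 := tendsto_self_mul_const_pow_of_lt_one
        (by norm_num : (0:ℝ) ≤ 3/4) (by norm_num : (3/4:ℝ) < 1)
      have h2 := tendsto_pow_atTop_nhds_zero_of_lt_one
        (by norm_num : (0:ℝ) ≤ 3/4) (by norm_num : (3/4:ℝ) < 1)
      have := h1.add h2
      simp only [add_zero] at this
      convert this using 2 with n
      ring
    have := (ENNReal.continuous_ofReal.tendsto 0).comp hreal
    simpa [Function.comp_def] using this
  exact le_antisymm (ge_of_tendsto' htend key) zero_le

end LDAux


theorem leftDown_components_finite (t : ℝ) (ht0 : 0 ≤ t) (ht : t ≤ 3 / 8)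
    (ν : Measure ((ℤ × ℤ) → LDState)) (hν : IsLeftDownMeasure t ν) :
    ν {σ | ∀ v : ℤ × ℤ, {w | (leftDownSubgraph σ).Reachable v w}.Finite} = 1 := by
  have hprob : IsProbabilityMeasure ν := hν.1
  set S := {σ : (ℤ × ℤ) → LDState |
    ∀ v : ℤ × ℤ, {w | (leftDownSubgraph σ).Reachable v w}.Finite} with hS
  have hcompl : ν Sᶜ = 0 := by
    have hsub : Sᶜ ⊆
        ⋃ v : ℤ × ℤ, {σ | {w | (leftDownSubgraph σ).Reachable v w}.Infinite} := by
      intro σ hσ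
      simp only [hS, Set.mem_compl_iff, Set.mem_setOf_eq, not_forall] at hσ
      obtain ⟨v, hv⟩ := hσ
      exact Set.mem_iUnion.2 ⟨v, hv⟩
    refine le_antisymm ?_ zero_le
    calc ν Sᶜ
        ≤ ν (⋃ v : ℤ × ℤ, {σ | {w | (leftDownSubgraph σ).Reachable v w}.Infinite}) :=
          measure_mono hsub
      _ ≤ ∑' v : ℤ × ℤ, ν {σ | {w | (leftDownSubgraph σ).Reachable v w}.Infinite} :=
          measure_iUnion_le _
      _ = 0 := by
          have hz : ∀ v : ℤ × ℤ,
              ν {σ | {w | (leftDownSubgraph σ).Reachable v w}.Infinite} = 0 :=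
            LDAux.measure_event_zero ht0 ht ν hν
          simp [hz]
  refine le_antisymm prob_le_one ?_
  have hle := measure_union_le (μ := ν) S Sᶜ
  rw [Set.union_compl_self, measure_univ, hcompl, add_zero] at hle
  exact hle


end OneIndep
end

section
/- Let G be a finite connected graph with v(G) vertices, let p ∈ [0,1] and α ∈ (0, 1/2], and suppose that (f_{1,G}(p))² ≥ (1/(α(1−α)))·(1−p)^{v(G)}. Then for every ℓ ∈ ℕ, f_{1, P_ℓ × G}(p) ≥ ((1−α)·f_{1,G}(p))^ℓ. -/
open MeasureTheory ProbabilityTheory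

namespace OneIndep

variable {V : Type*}

-- ### foundation
lemma measurableSet_of_finite {α : Type*} [MeasurableSpace α] [MeasurableSingletonClass α]
    [Finite α] (s : Set α) : MeasurableSet s := s.to_countable.measurableSet

instance configFinite [Finite V] (G : SimpleGraph V) : Finite (Config G) := by
  unfold Config; infer_instance

lemma config_measurableSet [Finite V] (G : SimpleGraph V) (s : Set (Config G)) :
    MeasurableSet s := measurableSet_of_finite s

/-- `s` depends only on the coordinates in `F`. -/
def DeterminedBy (G : SimpleGraph V) (F : Set (Sym2 V)) (s : Set (Config G)) : Prop :=
  ∀ ω ω' : Config G, (∀ e : G.edgeSet, (e : Sym2 V) ∈ F → ω e = ω' e) → ω ∈ s → ω' ∈ s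

lemma DeterminedBy.compl {G : SimpleGraph V} {F s} (h : DeterminedBy G F s) :
    DeterminedBy G F sᶜ := fun ω ω' hag hω hmem =>
  hω (h ω' ω (fun e he => (hag e he).symm) hmem)

lemma measurableSet_cylinder [Finite V] {G : SimpleGraph V} {F : Set (Sym2 V)}
    {s : Set (Config G)} (hdet : DeterminedBy G F s) :
    MeasurableSet[cylinderSigma G F] s := by
  refine ⟨(fun ω (e : {e : G.edgeSet // (e : Sym2 V) ∈ F}) => ω e) '' s,
    measurableSet_of_finite _, ?_⟩
  ext ω
  constructor
  · rintro ⟨ω', hω', hproj⟩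
    exact hdet ω' ω (fun e he => congrFun hproj ⟨e, he⟩) hω'
  · exact fun h => ⟨ω, h, rfl⟩

lemma determinedBy_of_measurableSet {G : SimpleGraph V} {F : Set (Sym2 V)}
    {s : Set (Config G)} (h : MeasurableSet[cylinderSigma G F] s) :
    DeterminedBy G F s := by
  obtain ⟨t, -, rfl⟩ := h
  intro ω ω' hag hω
  have heq : (fun (e : {e : G.edgeSet // (e : Sym2 V) ∈ F}) => ω' (e : G.edgeSet))
      = fun (e : {e : G.edgeSet // (e : Sym2 V) ∈ F}) => ω (e : G.edgeSet) :=
    funext fun e => (hag e.1 e.2).symm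
  have hω2 : (fun (e : {e : G.edgeSet // (e : Sym2 V) ∈ F}) => ω (e : G.edgeSet)) ∈ t := hω
  show (fun (e : {e : G.edgeSet // (e : Sym2 V) ∈ F}) => ω' (e : G.edgeSet)) ∈ t
  rw [heq]; exact hω2

lemma sym2_exists_mem {W : Type*} (e : Sym2 W) : ∃ x, x ∈ e := by
  induction e using Sym2.ind with
  | _ a b => exact ⟨a, Sym2.mem_mk_left a b⟩

lemma kDistant_one_of_endpoints {W : Type*} (G' : SimpleGraph W) {F₁ F₂ : Set (Sym2 W)}
    (h2 : Disjoint (endpointsOf F₁) (endpointsOf F₂)) : KDistant G' 1 F₁ F₂ := by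
  constructor
  · rw [Set.disjoint_left]
    intro e he1 he2
    obtain ⟨x, hx⟩ := sym2_exists_mem e
    exact Set.disjoint_left.mp h2 ⟨e, he1, hx⟩ ⟨e, he2, hx⟩
  · intro u hu v hv w
    rcases Nat.eq_zero_or_pos w.length with h | h
    · exact absurd (SimpleGraph.Walk.eq_of_length_eq_zero h)
        (fun huv => Set.disjoint_left.mp h2 hu (huv ▸ hv))
    · exact h

lemma kDistant_endpoint_disjoint {W : Type*} {G' : SimpleGraph W} {F₁ F₂ : Set (Sym2 W)}
    (h : KDistant G' 1 F₁ F₂) : Disjoint (endpointsOf F₁) (endpointsOf F₂) := by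
  rw [Set.disjoint_left]
  intro x hx1 hx2
  simpa using h.2 x hx1 x hx2 SimpleGraph.Walk.nil

lemma measure_inter_of_det [Finite V] {G : SimpleGraph V} {μ : Measure (Config G)}
    (hK : KIndepMeasure G 1 μ) {F₁ F₂ : Set (Sym2 V)} (hF₁ : F₁ ⊆ G.edgeSet)
    (hF₂ : F₂ ⊆ G.edgeSet) (hd : KDistant G 1 F₁ F₂) {s t : Set (Config G)}
    (hs : DeterminedBy G F₁ s) (ht : DeterminedBy G F₂ t) :
    μ (s ∩ t) = μ s * μ t :=
  ((Indep_iff _ _ μ).mp (hK F₁ F₂ hF₁ hF₂ hd)) s t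
    (measurableSet_cylinder hs) (measurableSet_cylinder ht)

-- product graph layer machinery
/-- The product graph `P_ℓ × G`. -/
abbrev HH (G : SimpleGraph V) (ℓ : ℕ) : SimpleGraph (Fin ℓ × V) :=
  (SimpleGraph.pathGraph ℓ).boxProd G

section Layers
variable [Fintype V] (G : SimpleGraph V) (ℓ : ℕ)


lemma mapEdge_mem (i : Fin ℓ) (e : Sym2 V) (he : e ∈ G.edgeSet) :
    Sym2.map (fun v => ((i, v) : Fin ℓ × V)) e ∈ (HH G ℓ).edgeSet := by
  induction e using Sym2.ind with
  | _ a b =>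
    rw [Sym2.map_pair_eq, SimpleGraph.mem_edgeSet] at *
    exact SimpleGraph.boxProd_adj.mpr (Or.inr ⟨he, rfl⟩)

omit [Fintype V] in
lemma mapEdge_fst (i : Fin ℓ) (e : Sym2 V) {x : Fin ℓ × V}
    (hx : x ∈ Sym2.map (fun v => ((i, v) : Fin ℓ × V)) e) : x.1 = i := by
  induction e using Sym2.ind with
  | _ a b =>
    rw [Sym2.map_pair_eq, Sym2.mem_iff] at hx
    rcases hx with rfl | rfl <;> rfl

/-- restriction of a configuration on the product graph to layer `i`. -/
def layerRestrict (i : Fin ℓ) (ω : Config (HH G ℓ)) : Config G :=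
  fun e => ω ⟨Sym2.map (fun v => (i, v)) e.1, mapEdge_mem G ℓ i e.1 e.2⟩

lemma layerRestrict_measurable (i : Fin ℓ) : Measurable (layerRestrict G ℓ i) :=
  measurable_pi_iff.mpr fun _ => measurable_pi_apply _

/-- event that layer `i` is internally connected. -/
def layerEvent (i : Fin ℓ) : Set (Config (HH G ℓ)) :=
  layerRestrict G ℓ i ⁻¹' {ω | (openSubgraph G ω).Connected}

/-- the vertical edge between layers `j` and `j+1` at vertex `v`. -/
def vedge (j : ℕ) (hj : j + 1 < ℓ) (v : V) : (HH G ℓ).edgeSet :=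
  ⟨s(((⟨j, Nat.lt_of_succ_lt hj⟩ : Fin ℓ), v), ((⟨j+1, hj⟩ : Fin ℓ), v)),
    by
      rw [SimpleGraph.mem_edgeSet]
      exact SimpleGraph.boxProd_adj.mpr
        (Or.inl ⟨SimpleGraph.pathGraph_adj.mpr (Or.inl rfl), rfl⟩)⟩

/-- event that some vertical edge between layers `j` and `j+1` is open. -/
def crossEvent (j : ℕ) (hj : j + 1 < ℓ) : Set (Config (HH G ℓ)) :=
  {ω | ∃ v : V, ω (vedge G ℓ j hj v) = true}

/-- prefix event. -/
def AEv (j : ℕ) : Set (Config (HH G ℓ)) :=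
  {ω | (∀ i : Fin ℓ, (i : ℕ) ≤ j → ω ∈ layerEvent G ℓ i) ∧
    ∀ m : ℕ, m < j → ∀ hm : m + 1 < ℓ, ω ∈ crossEvent G ℓ m hm}

def Dset : ℕ → Set (Config (HH G ℓ))
  | 0 => Set.univ
  | (k+1) => AEv G ℓ k

-- edge sets
def FE (i : Fin ℓ) : Set (Sym2 (Fin ℓ × V)) :=
  {e | e ∈ (HH G ℓ).edgeSet ∧ ∀ x ∈ e, x.1 = i}

def FA (j : ℕ) : Set (Sym2 (Fin ℓ × V)) :=
  {e | e ∈ (HH G ℓ).edgeSet ∧ ∀ x ∈ e, ((x.1 : ℕ) ≤ j)}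

def FX (j : ℕ) (hj : j + 1 < ℓ) : Set (Sym2 (Fin ℓ × V)) :=
  {e | ∃ v : V, e = (vedge G ℓ j hj v : Sym2 (Fin ℓ × V))}

def FD : ℕ → Set (Sym2 (Fin ℓ × V))
  | 0 => ∅
  | (k+1) => FA G ℓ k

lemma FE_subset (i : Fin ℓ) : FE G ℓ i ⊆ (HH G ℓ).edgeSet := fun _ he => he.1
lemma FA_subset (j : ℕ) : FA G ℓ j ⊆ (HH G ℓ).edgeSet := fun _ he => he.1
lemma FX_subset (j : ℕ) (hj : j + 1 < ℓ) : FX G ℓ j hj ⊆ (HH G ℓ).edgeSet := by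
  rintro e ⟨v, rfl⟩; exact (vedge G ℓ j hj v).2
lemma FD_subset (j : ℕ) : FD G ℓ j ⊆ (HH G ℓ).edgeSet := by
  cases j with
  | zero => simp [FD]
  | succ k => exact FA_subset G ℓ k

-- endpoint facts
lemma endpointsOf_FE {i : Fin ℓ} {x : Fin ℓ × V} (hx : x ∈ endpointsOf (FE G ℓ i)) :
    x.1 = i := by obtain ⟨e, he, hxe⟩ := hx; exact he.2 x hxe

lemma endpointsOf_FA {j : ℕ} {x : Fin ℓ × V} (hx : x ∈ endpointsOf (FA G ℓ j)) :
    (x.1 : ℕ) ≤ j := by obtain ⟨e, he, hxe⟩ := hx; exact he.2 x hxe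

lemma endpointsOf_FX {j : ℕ} {hj : j + 1 < ℓ} {x : Fin ℓ × V}
    (hx : x ∈ endpointsOf (FX G ℓ j hj)) : (x.1 : ℕ) = j ∨ (x.1 : ℕ) = j + 1 := by
  obtain ⟨e, ⟨v, rfl⟩, hxe⟩ := hx
  rw [vedge, Sym2.mem_iff] at hxe
  rcases hxe with rfl | rfl
  · exact Or.inl rfl
  · exact Or.inr rfl

lemma endpointsOf_FD {j : ℕ} {x : Fin ℓ × V} (hx : x ∈ endpointsOf (FD G ℓ j)) :
    (x.1 : ℕ) < j := by
  cases j with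
  | zero => obtain ⟨e, he, -⟩ := hx; simp [FD] at he
  | succ k => exact Nat.lt_succ_of_le (endpointsOf_FA G ℓ hx)

end Layers
section Det
variable [Fintype V] (G : SimpleGraph V) (ℓ : ℕ)

lemma layerRestrict_eq_of_agree {i : Fin ℓ} {j : ℕ} (hij : (i : ℕ) ≤ j)
    {ω ω' : Config (HH G ℓ)}
    (hag : ∀ e : (HH G ℓ).edgeSet, (e : Sym2 (Fin ℓ × V)) ∈ FA G ℓ j → ω e = ω' e) :
    layerRestrict G ℓ i ω = layerRestrict G ℓ i ω' := by
  funext e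
  exact hag _ ⟨mapEdge_mem G ℓ i e.1 e.2,
    fun x hx => by rw [mapEdge_fst ℓ i e.1 hx]; exact hij⟩

lemma det_layer (i : Fin ℓ) : DeterminedBy (HH G ℓ) (FE G ℓ i) (layerEvent G ℓ i) := by
  intro ω ω' hag hω
  have : layerRestrict G ℓ i ω = layerRestrict G ℓ i ω' := by
    funext e
    exact hag _ ⟨mapEdge_mem G ℓ i e.1 e.2, fun x hx => mapEdge_fst ℓ i e.1 hx⟩
  simpa only [layerEvent, Set.mem_preimage, this] using hω

lemma vedge_mem_FX (j : ℕ) (hj : j + 1 < ℓ) (v : V) :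
    ((vedge G ℓ j hj v : (HH G ℓ).edgeSet) : Sym2 (Fin ℓ × V)) ∈ FX G ℓ j hj := ⟨v, rfl⟩

lemma vedge_mem_FA {j m : ℕ} (hj : j + 1 < ℓ) (hm : j + 1 ≤ m) (v : V) :
    ((vedge G ℓ j hj v : (HH G ℓ).edgeSet) : Sym2 (Fin ℓ × V)) ∈ FA G ℓ m := by
  refine ⟨(vedge G ℓ j hj v).2, fun x hx => ?_⟩
  rw [vedge, Sym2.mem_iff] at hx
  rcases hx with rfl | rfl
  · exact le_trans (Nat.le_succ j) hm
  · exact hm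

lemma det_cross (j : ℕ) (hj : j + 1 < ℓ) :
    DeterminedBy (HH G ℓ) (FX G ℓ j hj) (crossEvent G ℓ j hj) := by
  rintro ω ω' hag ⟨v, hv⟩
  exact ⟨v, by rw [← hag _ (vedge_mem_FX G ℓ j hj v)]; exact hv⟩

lemma det_AEv (j : ℕ) : DeterminedBy (HH G ℓ) (FA G ℓ j) (AEv G ℓ j) := by
  rintro ω ω' hag ⟨h1, h2⟩
  constructor
  · intro i hi
    have := layerRestrict_eq_of_agree G ℓ hi hag
    simpa only [layerEvent, Set.mem_preimage, ← this] using h1 i hi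
  · rintro m hm hmℓ
    obtain ⟨v, hv⟩ := h2 m hm hmℓ
    exact ⟨v, by rw [← hag _ (vedge_mem_FA G ℓ hmℓ hm v)]; exact hv⟩

lemma det_Dset (j : ℕ) : DeterminedBy (HH G ℓ) (FD G ℓ j) (Dset G ℓ j) := by
  cases j with
  | zero => intro ω ω' _ _; trivial
  | succ k => exact det_AEv G ℓ k

lemma AEv_subset_Dset (j : ℕ) : AEv G ℓ j ⊆ Dset G ℓ j := by
  cases j with
  | zero => exact Set.subset_univ _
  | succ k =>
    rintro ω ⟨h1, h2⟩
    exact ⟨fun i hi => h1 i (le_trans hi (Nat.le_succ k)),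
      fun m hm hmℓ => h2 m (Nat.lt_succ_of_lt hm) hmℓ⟩

lemma AEv_zero (h0 : 0 < ℓ) : AEv G ℓ 0 = layerEvent G ℓ ⟨0, h0⟩ := by
  ext ω
  constructor
  · rintro ⟨h1, -⟩; exact h1 ⟨0, h0⟩ le_rfl
  · intro hω
    refine ⟨fun i hi => ?_, fun m hm => by omega⟩
    have : i = ⟨0, h0⟩ := Fin.ext (Nat.le_zero.mp hi)
    rwa [this]

lemma AEv_succ (j : ℕ) (hj : j + 1 < ℓ) :
    AEv G ℓ (j+1) = (layerEvent G ℓ ⟨j+1, hj⟩ ∩ AEv G ℓ j) ∩ crossEvent G ℓ j hj := by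
  ext ω
  constructor
  · rintro ⟨h1, h2⟩
    exact ⟨⟨h1 ⟨j+1, hj⟩ le_rfl, ⟨fun i hi => h1 i (le_trans hi (Nat.le_succ j)),
      fun m hm hmℓ => h2 m (Nat.lt_succ_of_lt hm) hmℓ⟩⟩, h2 j (Nat.lt_succ_self j) hj⟩
  · rintro ⟨⟨hE, hA1, hA2⟩, hX⟩
    refine ⟨fun i hi => ?_, fun m hm hmℓ => ?_⟩
    · rcases Nat.lt_succ_iff_lt_or_eq.mp (Nat.lt_succ_of_le hi) with h | h
      · exact hA1 i (Nat.lt_succ_iff.mp h)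
      · have : i = ⟨j+1, hj⟩ := Fin.ext h
        rwa [this]
    · rcases Nat.lt_succ_iff_lt_or_eq.mp hm with h | h
      · exact hA2 m h hmℓ
      · subst h
        have : hmℓ = hj := rfl
        rwa [this]

end Det
section Meas
variable [Fintype V] (G : SimpleGraph V) (ℓ : ℕ) {p : ℝ}
variable {μ : Measure (Config (HH G ℓ))}

lemma edge_closed_prob (hμ : μ ∈ MGe (HH G ℓ) 1 p) (hp0 : 0 ≤ p) (e : (HH G ℓ).edgeSet) :
    μ {ω | ω e = false} ≤ ENNReal.ofReal (1 - p) := by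
  haveI := hμ.1
  have hset : {ω : Config (HH G ℓ) | ω e = false} = {ω | ω e = true}ᶜ := by
    ext ω; simp
  rw [hset, prob_compl_eq_one_sub (config_measurableSet _ _)]
  calc 1 - μ {ω | ω e = true} ≤ 1 - ENNReal.ofReal p := tsub_le_tsub_left (hμ.2.2 e) 1
  _ = ENNReal.ofReal (1 - p) := by rw [ENNReal.ofReal_sub 1 hp0, ENNReal.ofReal_one]

def Fvs (j : ℕ) (hj : j + 1 < ℓ) (s : Finset V) : Set (Sym2 (Fin ℓ × V)) :=
  {e | ∃ v ∈ s, e = (vedge G ℓ j hj v : Sym2 (Fin ℓ × V))}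

lemma endpointsOf_Fvs {j : ℕ} {hj : j + 1 < ℓ} {s : Finset V} {x : Fin ℓ × V}
    (hx : x ∈ endpointsOf (Fvs G ℓ j hj s)) : x.2 ∈ s := by
  obtain ⟨e, ⟨v, hv, rfl⟩, hxe⟩ := hx
  rw [vedge, Sym2.mem_iff] at hxe
  rcases hxe with rfl | rfl <;> exact hv

lemma closed_all_prob (hμ : μ ∈ MGe (HH G ℓ) 1 p) (hp0 : 0 ≤ p) (j : ℕ) (hj : j + 1 < ℓ)
    (s : Finset V) :
    μ {ω | ∀ v ∈ s, ω (vedge G ℓ j hj v) = false} ≤ ENNReal.ofReal (1 - p) ^ s.card := by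
  haveI := hμ.1
  haveI : DecidableEq V := Classical.decEq V
  induction s using Finset.induction_on with
  | empty =>
    simp only [Finset.notMem_empty, false_implies, implies_true, Set.setOf_true,
      Finset.card_empty, pow_zero, measure_univ, le_refl]
  | @insert a s ha ih =>
    have hsplit : {ω : Config (HH G ℓ) | ∀ v ∈ insert a s, ω (vedge G ℓ j hj v) = false}
        = {ω | ω (vedge G ℓ j hj a) = false} ∩ {ω | ∀ v ∈ s, ω (vedge G ℓ j hj v) = false} := by
      ext ω; simp [Finset.forall_mem_insert]
    have hdisj : Disjoint (endpointsOf (Fvs G ℓ j hj {a})) (endpointsOf (Fvs G ℓ j hj s)) := by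
      rw [Set.disjoint_left]
      intro x hx1 hx2
      have h1 := endpointsOf_Fvs G ℓ hx1
      have h2 := endpointsOf_Fvs G ℓ hx2
      rw [Finset.mem_singleton] at h1
      exact ha (h1 ▸ h2)
    have det1 : DeterminedBy (HH G ℓ) (Fvs G ℓ j hj {a})
        {ω : Config (HH G ℓ) | ω (vedge G ℓ j hj a) = false} := by
      intro ω ω' hag hω
      have := hag (vedge G ℓ j hj a) ⟨a, Finset.mem_singleton_self a, rfl⟩
      simp only [Set.mem_setOf_eq] at *
      rw [← this]; exact hω
    have det2 : DeterminedBy (HH G ℓ) (Fvs G ℓ j hj s)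
        {ω : Config (HH G ℓ) | ∀ v ∈ s, ω (vedge G ℓ j hj v) = false} := by
      intro ω ω' hag hω v hv
      rw [← hag (vedge G ℓ j hj v) ⟨v, hv, rfl⟩]
      exact hω v hv
    have hsub : ∀ t : Finset V, Fvs G ℓ j hj t ⊆ (HH G ℓ).edgeSet := by
      rintro t e ⟨v, -, rfl⟩; exact (vedge G ℓ j hj v).2
    rw [hsplit, measure_inter_of_det hμ.2.1 (hsub {a}) (hsub s)
      (kDistant_one_of_endpoints _ hdisj) det1 det2,
      Finset.card_insert_of_notMem ha, pow_succ']
    exact mul_le_mul' (edge_closed_prob G ℓ hμ hp0 _) ih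

lemma cross_compl_prob (hμ : μ ∈ MGe (HH G ℓ) 1 p) (hp0 : 0 ≤ p) (hp1 : p ≤ 1) (j : ℕ) (hj : j + 1 < ℓ) :
    μ ((crossEvent G ℓ j hj)ᶜ) ≤ ENNReal.ofReal ((1 - p) ^ Fintype.card V) := by
  have hset : (crossEvent G ℓ j hj)ᶜ
      = {ω : Config (HH G ℓ) | ∀ v ∈ (Finset.univ : Finset V), ω (vedge G ℓ j hj v) = false} := by
    ext ω
    simp [crossEvent]
  rw [hset, ENNReal.ofReal_pow (by linarith : (0:ℝ) ≤ 1 - p)]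
  simpa using closed_all_prob G ℓ hμ hp0 j hj Finset.univ

lemma indep_layer_AEv (hμ : μ ∈ MGe (HH G ℓ) 1 p) (j : ℕ) (hj : j + 1 < ℓ) :
    μ (layerEvent G ℓ ⟨j+1, hj⟩ ∩ AEv G ℓ j)
      = μ (layerEvent G ℓ ⟨j+1, hj⟩) * μ (AEv G ℓ j) := by
  refine measure_inter_of_det hμ.2.1 (FE_subset G ℓ _) (FA_subset G ℓ _)
    (kDistant_one_of_endpoints _ ?_) (det_layer G ℓ _) (det_AEv G ℓ _)
  rw [Set.disjoint_left]
  intro x hx1 hx2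
  have h1 := endpointsOf_FE G ℓ hx1
  have h2 := endpointsOf_FA G ℓ hx2
  rw [h1] at h2
  simp only at h2
  omega

lemma indep_Dset_cross (hμ : μ ∈ MGe (HH G ℓ) 1 p) (j : ℕ) (hj : j + 1 < ℓ) :
    μ (Dset G ℓ j ∩ (crossEvent G ℓ j hj)ᶜ)
      = μ (Dset G ℓ j) * μ ((crossEvent G ℓ j hj)ᶜ) := by
  refine measure_inter_of_det hμ.2.1 (FD_subset G ℓ _) (FX_subset G ℓ _ _)
    (kDistant_one_of_endpoints _ ?_) (det_Dset G ℓ _) ((det_cross G ℓ _ _).compl)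
  rw [Set.disjoint_left]
  intro x hx1 hx2
  have h1 := endpointsOf_FD G ℓ hx1
  have h2 := endpointsOf_FX G ℓ hx2
  omega

lemma layer_prob (hμ : μ ∈ MGe (HH G ℓ) 1 p) (i : Fin ℓ) :
    connFun G 1 p ≤ (μ (layerEvent G ℓ i)).toReal := by
  haveI := hμ.1
  have hrm : Measurable (layerRestrict G ℓ i) := layerRestrict_measurable G ℓ i
  set ν := μ.map (layerRestrict G ℓ i) with hν
  have hmap : ∀ s : Set (Config G), ν s = μ (layerRestrict G ℓ i ⁻¹' s) := fun s =>
    Measure.map_apply hrm (config_measurableSet _ _)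
  have hνM : ν ∈ MGe G 1 p := by
    refine ⟨Measure.isProbabilityMeasure_map hrm.aemeasurable, ?_, ?_⟩
    · intro F₁ F₂ hF₁ hF₂ hd
      rw [Indep_iff]
      intro t1 t2 ht1 ht2
      have key : ∀ (F : Set (Sym2 V)), ∀ t : Set (Config G),
          MeasurableSet[cylinderSigma G F] t →
          DeterminedBy (HH G ℓ) (Sym2.map (fun v => ((i, v) : Fin ℓ × V)) '' F)
            (layerRestrict G ℓ i ⁻¹' t) := by
        intro F t ht ω ω' hag hω
        refine determinedBy_of_measurableSet ht _ _ (fun e he => ?_) hω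
        exact hag ⟨Sym2.map (fun v => ((i, v) : Fin ℓ × V)) e.1, mapEdge_mem G ℓ i e.1 e.2⟩
          ⟨e.1, he, rfl⟩
      have hepd : Disjoint (endpointsOf F₁) (endpointsOf F₂) := kDistant_endpoint_disjoint hd
      have hd' : KDistant (HH G ℓ) 1
          (Sym2.map (fun v => ((i, v) : Fin ℓ × V)) '' F₁)
          (Sym2.map (fun v => ((i, v) : Fin ℓ × V)) '' F₂) := by
        apply kDistant_one_of_endpoints
        rw [Set.disjoint_left]
        rintro x ⟨e, ⟨e₀, he₀, rfl⟩, hxe⟩ ⟨e', ⟨e₀', he₀', rfl⟩, hxe'⟩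
        obtain ⟨y, hy, rfl⟩ := Sym2.mem_map.mp hxe
        obtain ⟨y', hy', hyy⟩ := Sym2.mem_map.mp hxe'
        have hyy' : y' = y := (Prod.ext_iff.mp hyy).2
        exact Set.disjoint_left.mp hepd ⟨e₀, he₀, hy⟩ ⟨e₀', he₀', hyy' ▸ hy'⟩
      have hsub : ∀ (F : Set (Sym2 V)), F ⊆ G.edgeSet →
          Sym2.map (fun v => ((i, v) : Fin ℓ × V)) '' F ⊆ (HH G ℓ).edgeSet := by
        rintro F hF e ⟨e₀, he₀, rfl⟩; exact mapEdge_mem G ℓ i e₀ (hF he₀)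
      rw [hmap, hmap, hmap, Set.preimage_inter]
      exact measure_inter_of_det hμ.2.1 (hsub F₁ hF₁) (hsub F₂ hF₂) hd'
        (key F₁ t1 ht1) (key F₂ t2 ht2)
    · intro e
      rw [hmap]
      exact hμ.2.2 ⟨Sym2.map (fun v => ((i, v) : Fin ℓ × V)) e.1, mapEdge_mem G ℓ i e.1 e.2⟩
  have hbdd : BddBelow {x | ∃ μ' ∈ MGe G 1 p,
      x = (μ' {ω | (openSubgraph G ω).Connected}).toReal} := by
    refine ⟨0, ?_⟩
    rintro x ⟨μ', -, rfl⟩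
    exact ENNReal.toReal_nonneg
  have hle := csInf_le hbdd (⟨ν, hνM, rfl⟩ : (ν {ω | (openSubgraph G ω).Connected}).toReal ∈
      {x | ∃ μ' ∈ MGe G 1 p, x = (μ' {ω | (openSubgraph G ω).Connected}).toReal})
  calc connFun G 1 p ≤ (ν {ω | (openSubgraph G ω).Connected}).toReal := hle
  _ = (μ (layerEvent G ℓ i)).toReal := by rw [hmap]; rfl

end Meas
section Conn
variable [Fintype V] (G : SimpleGraph V) (ℓ : ℕ)

lemma open_adj_layer {i : Fin ℓ} {ω : Config (HH G ℓ)} {u v : V}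
    (h : (openSubgraph G (layerRestrict G ℓ i ω)).Adj u v) :
    (openSubgraph (HH G ℓ) ω).Adj (i, u) (i, v) := by
  rw [openSubgraph, SimpleGraph.fromEdgeSet_adj] at h ⊢
  obtain ⟨⟨he, hop⟩, hne⟩ := h
  have hmem := mapEdge_mem G ℓ i s(u, v) he
  rw [Sym2.map_pair_eq] at hmem
  refine ⟨⟨hmem, ?_⟩, fun hh => hne (congrArg Prod.snd hh)⟩
  have heq : (⟨s((i, u), (i, v)), hmem⟩ : (HH G ℓ).edgeSet)
      = ⟨Sym2.map (fun v => ((i, v) : Fin ℓ × V)) s(u, v), mapEdge_mem G ℓ i s(u, v) he⟩ :=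
    Subtype.ext (by
      show s((i, u), (i, v)) = Sym2.map (fun v => ((i, v) : Fin ℓ × V)) s(u, v)
      exact (Sym2.map_pair_eq _ u v).symm)
  rw [heq]
  exact hop

lemma layer_reachable {i : Fin ℓ} {ω : Config (HH G ℓ)} {u v : V}
    (h : (openSubgraph G (layerRestrict G ℓ i ω)).Reachable u v) :
    (openSubgraph (HH G ℓ) ω).Reachable (i, u) (i, v) :=
  SimpleGraph.Reachable.map
    ⟨fun w => (i, w), fun hadj => open_adj_layer G ℓ hadj⟩ h

lemma cross_adj {j : ℕ} (hj : j + 1 < ℓ) {ω : Config (HH G ℓ)} {v : V}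
    (h : ω (vedge G ℓ j hj v) = true) :
    (openSubgraph (HH G ℓ) ω).Adj
      ((⟨j, Nat.lt_of_succ_lt hj⟩ : Fin ℓ), v) ((⟨j+1, hj⟩ : Fin ℓ), v) := by
  rw [openSubgraph, SimpleGraph.fromEdgeSet_adj]
  refine ⟨⟨(vedge G ℓ j hj v).2, h⟩, ?_⟩
  intro heq
  have h2 := congrArg Prod.fst heq
  simp only [Fin.mk.injEq] at h2
  omega

lemma AEv_subset_conn (hV : Nonempty V) (hℓ : 0 < ℓ) :
    AEv G ℓ (ℓ - 1) ⊆ {ω | (openSubgraph (HH G ℓ) ω).Connected} := by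
  rintro ω ⟨hL, hX⟩
  obtain ⟨u₀⟩ := hV
  have hlayer : ∀ i : Fin ℓ, ∀ u v : V,
      (openSubgraph (HH G ℓ) ω).Reachable (i, u) (i, v) := by
    intro i u v
    have hc : ω ∈ layerEvent G ℓ i := hL i (by omega)
    exact layer_reachable G ℓ (hc.preconnected u v)
  have claim : ∀ m, ∀ hm : m < ℓ, ∀ u : V,
      (openSubgraph (HH G ℓ) ω).Reachable (⟨0, hℓ⟩, u₀) (⟨m, hm⟩, u) := by
    intro m
    induction m with
    | zero => intro hm u; exact hlayer ⟨0, hℓ⟩ u₀ u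
    | succ k ih =>
      intro hm u
      have hk : k < ℓ := Nat.lt_of_succ_lt hm
      obtain ⟨v, hv⟩ := hX k (by omega) hm
      have h1 := ih hk v
      have h2 := (cross_adj G ℓ hm hv).reachable
      have h3 := hlayer ⟨k+1, hm⟩ v u
      exact (h1.trans h2).trans h3
  show (openSubgraph (HH G ℓ) ω).Connected
  rw [SimpleGraph.connected_iff]
  refine ⟨fun x y => ?_, ⟨(⟨0, hℓ⟩, u₀)⟩⟩
  obtain ⟨⟨mx, hmx⟩, ux⟩ := x
  obtain ⟨⟨my, hmy⟩, uy⟩ := y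
  exact (claim mx hmx ux).symm.trans (claim my hmy uy)

end Conn

lemma MGe_dirac_mem {W : Type*} [Fintype W] (K : SimpleGraph W) (p : ℝ) (hp1 : p ≤ 1) :
    (Measure.dirac (fun _ => true : Config K)) ∈ MGe K 1 p := by
  refine ⟨by infer_instance, ?_, ?_⟩
  · intro F₁ F₂ _ _ _
    rw [Indep_iff]
    intro t1 t2 _ _
    rw [Measure.dirac_apply' _ (config_measurableSet _ _),
      Measure.dirac_apply' _ (config_measurableSet _ _),
      Measure.dirac_apply' _ (config_measurableSet _ _)]
    classical
    by_cases h1 : (fun _ => true : Config K) ∈ t1 <;>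
      by_cases h2 : (fun _ => true : Config K) ∈ t2 <;>
        simp [Set.indicator_apply, h1, h2, Set.mem_inter_iff]
  · intro e
    rw [Measure.dirac_apply' _ (config_measurableSet _ _)]
    have hmem : (fun _ => true : Config K) ∈ {ω : Config K | ω e = true} := rfl
    rw [Set.indicator_of_mem hmem]
    simpa using ENNReal.ofReal_le_one.mpr hp1

lemma connSet_nonempty {W : Type*} [Fintype W] (K : SimpleGraph W) (p : ℝ) (hp1 : p ≤ 1) :
    {x | ∃ μ ∈ MGe K 1 p, x = (μ {ω | (openSubgraph K ω).Connected}).toReal}.Nonempty :=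
  ⟨_, Measure.dirac _, MGe_dirac_mem K p hp1, rfl⟩

section Step
variable [Fintype V] (G : SimpleGraph V) (ℓ : ℕ) {p : ℝ}
variable {μ : Measure (Config (HH G ℓ))}

lemma step_real (hμ : μ ∈ MGe (HH G ℓ) 1 p) (hp0 : 0 ≤ p) (hp1 : p ≤ 1)
    (j : ℕ) (hj : j + 1 < ℓ) :
    (μ (layerEvent G ℓ ⟨j+1, hj⟩)).toReal * (μ (AEv G ℓ j)).toReal
      - (1 - p) ^ Fintype.card V * (μ (Dset G ℓ j)).toReal
      ≤ (μ (AEv G ℓ (j+1))).toReal := by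
  haveI := hμ.1
  set q := (1 - p) ^ Fintype.card V with hqdef
  set E := layerEvent G ℓ ⟨j+1, hj⟩
  set A := AEv G ℓ j
  set X := crossEvent G ℓ j hj
  set D := Dset G ℓ j
  have hsub : E ∩ A ⊆ ((E ∩ A) ∩ X) ∪ (D ∩ Xᶜ) := by
    intro ω hω
    by_cases hx : ω ∈ X
    · exact Or.inl ⟨hω, hx⟩
    · exact Or.inr ⟨AEv_subset_Dset G ℓ j hω.2, hx⟩
  have hle : μ (E ∩ A) ≤ μ (AEv G ℓ (j+1)) + μ (D ∩ Xᶜ) := by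
    rw [AEv_succ G ℓ j hj]
    exact le_trans (measure_mono hsub) (measure_union_le _ _)
  have h1 : (μ (E ∩ A)).toReal = (μ E).toReal * (μ A).toReal := by
    rw [indep_layer_AEv G ℓ hμ j hj, ENNReal.toReal_mul]
  have h2 : (μ (D ∩ Xᶜ)).toReal = (μ D).toReal * (μ Xᶜ).toReal := by
    rw [indep_Dset_cross G ℓ hμ j hj, ENNReal.toReal_mul]
  have h3 : (μ Xᶜ).toReal ≤ q := by
    have hmono := ENNReal.toReal_mono ENNReal.ofReal_ne_top
      (cross_compl_prob G ℓ hμ hp0 hp1 j hj)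
    rwa [ENNReal.toReal_ofReal (pow_nonneg (by linarith) _)] at hmono
  have hfin : (μ (E ∩ A)).toReal ≤ (μ (AEv G ℓ (j+1))).toReal + (μ (D ∩ Xᶜ)).toReal := by
    have hmono := ENNReal.toReal_mono
      (ENNReal.add_ne_top.mpr ⟨measure_ne_top _ _, measure_ne_top _ _⟩) hle
    rwa [ENNReal.toReal_add (measure_ne_top _ _) (measure_ne_top _ _)] at hmono
  have h4 : (μ D).toReal * (μ Xᶜ).toReal ≤ (μ D).toReal * q :=
    mul_le_mul_of_nonneg_left h3 ENNReal.toReal_nonneg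
  nlinarith [hfin, h1, h2, h4]

end Step

theorem connFun_boxProd_pathGraph_ge {V : Type*} [Fintype V] (G : SimpleGraph V)
    (hconn : G.Connected) (p : ℝ) (hp : p ∈ Set.Icc (0:ℝ) 1)
    (α : ℝ) (hα : α ∈ Set.Ioc (0:ℝ) (1 / 2))
    (h : (1 / (α * (1 - α))) * (1 - p) ^ (Fintype.card V) ≤ connFun G 1 p ^ 2) :
    ∀ ℓ : ℕ, 1 ≤ ℓ →
      ((1 - α) * connFun G 1 p) ^ ℓ ≤ connFun ((SimpleGraph.pathGraph ℓ).boxProd G) 1 p := by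
  intro ℓ hℓ
  obtain ⟨hp0, hp1⟩ := hp
  obtain ⟨hα0, hα2⟩ := hα
  have hα1 : 0 < 1 - α := by linarith
  set f := connFun G 1 p with hfdef
  have hf0 : 0 ≤ f := Real.sInf_nonneg (by rintro x ⟨μ', -, rfl⟩; exact ENNReal.toReal_nonneg)
  set q := (1 - p) ^ (Fintype.card V) with hqdef
  have hq0 : 0 ≤ q := pow_nonneg (by linarith) _
  have hαα : 0 < α * (1 - α) := mul_pos hα0 hα1
  have hq : q ≤ α * (1 - α) * f ^ 2 := by
    have h' := mul_le_mul_of_nonneg_left h (le_of_lt hαα)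
    calc q = α * (1 - α) * (1 / (α * (1 - α)) * q) := by field_simp
    _ ≤ α * (1 - α) * f ^ 2 := h'
  have hV : Nonempty V := hconn.nonempty
  show ((1 - α) * f) ^ ℓ ≤ connFun (HH G ℓ) 1 p
  rw [connFun]
  refine le_csInf (connSet_nonempty _ p hp1) ?_
  rintro x ⟨μ, hμM, rfl⟩
  haveI := hμM.1
  have key : ∀ j, j < ℓ → (((1 - α) * f) ^ j * f ≤ (μ (AEv G ℓ j)).toReal ∧
      (1 - α) * f * (μ (Dset G ℓ j)).toReal ≤ (μ (AEv G ℓ j)).toReal) := by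
    intro j
    induction j with
    | zero =>
      intro h0
      have hPA : f ≤ (μ (AEv G ℓ 0)).toReal := by
        rw [AEv_zero G ℓ h0]; exact layer_prob G ℓ hμM _
      have hD1 : (μ (Dset G ℓ 0)).toReal = 1 := by
        have h1 : μ (Dset G ℓ 0) = 1 := measure_univ
        rw [h1, ENNReal.toReal_one]
      constructor
      · simpa using hPA
      · rw [hD1, mul_one]
        nlinarith [mul_nonneg (le_of_lt hα0) hf0]
    | succ k ih =>
      intro hk1
      have hk : k < ℓ := Nat.lt_of_succ_lt hk1
      obtain ⟨ih1, ih2⟩ := ih hk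
      have hstep := step_real G ℓ hμM hp0 hp1 k hk1
      have hlayer := layer_prob G ℓ hμM ⟨k+1, hk1⟩
      have hPA0 : 0 ≤ (μ (AEv G ℓ k)).toReal := ENNReal.toReal_nonneg
      have hPD0 : 0 ≤ (μ (Dset G ℓ k)).toReal := ENNReal.toReal_nonneg
      have hkey2 : (1 - α) * f * (μ (AEv G ℓ k)).toReal ≤ (μ (AEv G ℓ (k+1))).toReal := by
        have h5 : f * (μ (AEv G ℓ k)).toReal
            ≤ (μ (layerEvent G ℓ ⟨k+1, hk1⟩)).toReal * (μ (AEv G ℓ k)).toReal :=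
          mul_le_mul_of_nonneg_right hlayer hPA0
        have h6 : q * (μ (Dset G ℓ k)).toReal
            ≤ α * (1 - α) * f ^ 2 * (μ (Dset G ℓ k)).toReal :=
          mul_le_mul_of_nonneg_right hq hPD0
        have h7 : (α * f) * ((1 - α) * f * (μ (Dset G ℓ k)).toReal)
            ≤ (α * f) * (μ (AEv G ℓ k)).toReal :=
          mul_le_mul_of_nonneg_left ih2 (mul_nonneg (le_of_lt hα0) hf0)
        nlinarith [hstep, h5, h6, h7]
      have hDk : Dset G ℓ (k+1) = AEv G ℓ k := rfl
      refine ⟨?_, by rw [hDk]; exact hkey2⟩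
      calc ((1 - α) * f) ^ (k+1) * f = ((1 - α) * f) * (((1 - α) * f) ^ k * f) := by ring
      _ ≤ ((1 - α) * f) * (μ (AEv G ℓ k)).toReal :=
          mul_le_mul_of_nonneg_left ih1 (mul_nonneg (le_of_lt hα1) hf0)
      _ = (1 - α) * f * (μ (AEv G ℓ k)).toReal := by ring
      _ ≤ (μ (AEv G ℓ (k+1))).toReal := hkey2
  obtain ⟨hfin1, -⟩ := key (ℓ - 1) (by omega)
  have hmono : (μ (AEv G ℓ (ℓ - 1))).toReal
      ≤ (μ {ω | (openSubgraph (HH G ℓ) ω).Connected}).toReal :=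
    ENNReal.toReal_mono (measure_ne_top _ _)
      (measure_mono (AEv_subset_conn G ℓ hV (by omega)))
  calc ((1 - α) * f) ^ ℓ = ((1 - α) * f) ^ (ℓ - 1) * ((1 - α) * f) := by
        rw [← pow_succ]; congr 1; omega
  _ ≤ ((1 - α) * f) ^ (ℓ - 1) * f := by
      apply mul_le_mul_of_nonneg_left ?_ (pow_nonneg (mul_nonneg (le_of_lt hα1) hf0) _)
      nlinarith [mul_nonneg (le_of_lt hα0) hf0]
  _ ≤ (μ (AEv G ℓ (ℓ - 1))).toReal := hfin1
  _ ≤ (μ {ω | (openSubgraph (HH G ℓ) ω).Connected}).toReal := hmono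



end OneIndep
end

section
/- Let G be a finite connected graph with v(G) vertices, and let p ∈ [0,1] satisfy (f_{1,G}(p))² ≥ 4·(1−p)^{v(G)}. Then the long paths critical probability satisfies p_{1,ℓp}(ℤ × G) ≤ p. -/
open MeasureTheory ProbabilityTheory

namespace OneIndep

variable {V : Type*}

section Aux

open SimpleGraph

variable {W : Type*}

lemma measurableSet_finite_pi {ι : Type*} [Finite ι] (s : Set (ι → Bool)) : MeasurableSet s :=
  s.toFinite.measurableSet

lemma measurableSet_all {G : SimpleGraph W} [Finite W] (s : Set (Config G)) : MeasurableSet s :=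
  s.toFinite.measurableSet

lemma cylinderSigma_le (G : SimpleGraph W) (F : Set (Sym2 W)) {s : Set (Config G)}
    (hs : MeasurableSet[cylinderSigma G F] s) : MeasurableSet s := by
  obtain ⟨A, hA, rfl⟩ := MeasurableSpace.measurableSet_comap.mp hs
  exact (measurable_pi_lambda _ fun e => measurable_pi_apply _) hA

lemma measurableSet_cylinderSigma {G : SimpleGraph W} {F : Set (Sym2 W)}
    (hF : F.Finite) {s : Set (Config G)}
    (hs : ∀ ω₁ ω₂ : Config G, (∀ e : G.edgeSet, (e : Sym2 W) ∈ F → ω₁ e = ω₂ e) →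
      ω₁ ∈ s → ω₂ ∈ s) :
    MeasurableSet[cylinderSigma G F] s := by
  haveI : Finite {e : G.edgeSet // (e : Sym2 W) ∈ F} := by
    haveI := hF.to_subtype
    exact Finite.of_injective (fun x => (⟨x.1.1, x.2⟩ : F))
      (by rintro ⟨⟨e, he⟩, h⟩ ⟨⟨e', he'⟩, h'⟩ hh; simpa using congrArg Subtype.val hh)
  rw [cylinderSigma, MeasurableSpace.measurableSet_comap]
  refine ⟨(fun ω (e : {e : G.edgeSet // (e : Sym2 W) ∈ F}) => ω e) '' s,
    measurableSet_finite_pi _, ?_⟩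
  ext ω
  simp only [Set.mem_preimage, Set.mem_image]
  constructor
  · rintro ⟨ω₂, hω₂, hEq⟩
    exact hs ω₂ ω (fun e he => congrFun hEq ⟨e, he⟩) hω₂
  · exact fun h => ⟨ω, h, rfl⟩

lemma kDistant_one (G : SimpleGraph W) {F₁ F₂ : Set (Sym2 W)}
    (h : ∀ x ∈ endpointsOf F₁, ∀ y ∈ endpointsOf F₂, x ≠ y) : KDistant G 1 F₁ F₂ := by
  constructor
  · rw [Set.disjoint_left]
    intro e he₁ he₂
    induction e using Sym2.ind with
    | _ a b => exact h a ⟨_, he₁, Sym2.mem_mk_left a b⟩ a ⟨_, he₂, Sym2.mem_mk_left a b⟩ rfl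
  · intro u hu v hv w
    rcases Nat.eq_zero_or_pos w.length with h0 | h1
    · exact absurd (SimpleGraph.Walk.eq_of_length_eq_zero h0) (h u hu v hv)
    · exact h1

lemma kIndep_apply {G : SimpleGraph W} {μ : Measure (Config G)}
    (hμ : KIndepMeasure G 1 μ) {F₁ F₂ : Set (Sym2 W)} (h₁ : F₁ ⊆ G.edgeSet)
    (h₂ : F₂ ⊆ G.edgeSet) (hd : KDistant G 1 F₁ F₂) (hF₁ : F₁.Finite) (hF₂ : F₂.Finite)
    {s t : Set (Config G)}
    (hs : ∀ ω₁ ω₂, (∀ e : G.edgeSet, (e : Sym2 W) ∈ F₁ → ω₁ e = ω₂ e) → ω₁ ∈ s → ω₂ ∈ s)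
    (ht : ∀ ω₁ ω₂, (∀ e : G.edgeSet, (e : Sym2 W) ∈ F₂ → ω₁ e = ω₂ e) → ω₁ ∈ t → ω₂ ∈ t) :
    μ (s ∩ t) = μ s * μ t :=
  (Indep_iff _ _ _).mp (hμ F₁ F₂ h₁ h₂ hd) s t
    (measurableSet_cylinderSigma hF₁ hs) (measurableSet_cylinderSigma hF₂ ht)

lemma cylinderSigma_determined {G : SimpleGraph W} {F : Set (Sym2 W)} {s : Set (Config G)}
    (hs : MeasurableSet[cylinderSigma G F] s) {ω₁ ω₂ : Config G}
    (hagree : ∀ e : G.edgeSet, (e : Sym2 W) ∈ F → ω₁ e = ω₂ e) (h : ω₁ ∈ s) : ω₂ ∈ s := by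
  obtain ⟨A, -, rfl⟩ := MeasurableSpace.measurableSet_comap.mp hs
  have hEq : (fun e : {e : G.edgeSet // (e : Sym2 W) ∈ F} => ω₁ e) =
      (fun e : {e : G.edgeSet // (e : Sym2 W) ∈ F} => ω₂ e) :=
    funext fun e => hagree e.1 e.2
  show (fun e : {e : G.edgeSet // (e : Sym2 W) ∈ F} => ω₂ e) ∈ A
  rw [← hEq]; exact h

lemma kDistant_ne {G : SimpleGraph W} {F₁ F₂ : Set (Sym2 W)} (hd : KDistant G 1 F₁ F₂)
    {u : W} (hu : u ∈ endpointsOf F₁) (hv : u ∈ endpointsOf F₂) : False := by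
  simpa using hd.2 u hu u hv SimpleGraph.Walk.nil

lemma openSubgraph_le (G : SimpleGraph W) (ω : Config G) : openSubgraph G ω ≤ G := by
  intro a b hab
  rw [openSubgraph, SimpleGraph.fromEdgeSet_adj] at hab
  obtain ⟨⟨he, -⟩, -⟩ := hab
  exact G.mem_edgeSet.mp he

lemma le_openSubgraph (G : SimpleGraph W) (ω : Config G) (hω : ∀ e, ω e = true) :
    G ≤ openSubgraph G ω := by
  intro a b hab
  rw [openSubgraph, SimpleGraph.fromEdgeSet_adj]
  exact ⟨⟨G.mem_edgeSet.mpr hab, hω _⟩, hab.ne⟩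

end Aux


section Box

open SimpleGraph

variable {V : Type*} (G : SimpleGraph V)

/-- Embedding of `Sym2 V` into column `i` of `ℤ × V`. -/
def emb (i : ℤ) (e : Sym2 V) : Sym2 (ℤ × V) := Sym2.map (fun v => (i, v)) e

lemma emb_mem_edgeSet (i : ℤ) {e : Sym2 V} (he : e ∈ G.edgeSet) :
    emb i e ∈ (lineLattice.boxProd G).edgeSet := by
  induction e using Sym2.ind with
  | _ a b =>
    rw [emb, Sym2.map_pair_eq, SimpleGraph.mem_edgeSet, SimpleGraph.boxProd_adj]
    exact Or.inr ⟨G.mem_edgeSet.mp he, rfl⟩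

/-- Restriction of a configuration on `ℤ × G` to column `i`. -/
def res (i : ℤ) (ω : Config (lineLattice.boxProd G)) : Config G :=
  fun e => ω ⟨emb i e.1, emb_mem_edgeSet G i e.2⟩

lemma res_measurable (i : ℤ) : Measurable (res G i) :=
  measurable_pi_lambda _ fun _ => measurable_pi_apply _

/-- The cross edge between `(i, v)` and `(i+1, v)`. -/
def crossEdge (i : ℤ) (v : V) : Sym2 (ℤ × V) := s((i, v), (i + 1, v))

lemma crossEdge_mem (i : ℤ) (v : V) : crossEdge (V := V) i v ∈ (lineLattice.boxProd G).edgeSet := by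
  rw [crossEdge, SimpleGraph.mem_edgeSet, SimpleGraph.boxProd_adj]
  refine Or.inl ⟨?_, rfl⟩
  rw [lineLattice, SimpleGraph.fromRel_adj]
  exact ⟨by omega, Or.inl rfl⟩

/-- Edges of column `i`. -/
def colE (i : ℤ) : Set (Sym2 (ℤ × V)) := emb i '' G.edgeSet

/-- Cross edges between columns `i` and `i+1`. -/
def crossE (i : ℤ) : Set (Sym2 (ℤ × V)) := Set.range (crossEdge (V := V) i)

/-- Edges of the block spanning columns `0, …, m`. -/
def blockE : ℕ → Set (Sym2 (ℤ × V))
  | 0 => colE G 0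
  | m + 1 => blockE m ∪ crossE (V := V) (m : ℤ) ∪ colE G ((m : ℤ) + 1)

lemma colE_subset (i : ℤ) : colE G i ⊆ (lineLattice.boxProd G).edgeSet := by
  rintro e ⟨e', he', rfl⟩
  exact emb_mem_edgeSet G i he'

lemma crossE_subset (i : ℤ) : crossE (V := V) i ⊆ (lineLattice.boxProd G).edgeSet := by
  rintro e ⟨v, rfl⟩
  exact crossEdge_mem G i v

lemma blockE_subset (m : ℕ) : blockE G m ⊆ (lineLattice.boxProd G).edgeSet := by
  induction m with
  | zero => exact colE_subset G 0
  | succ m ih =>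
    exact Set.union_subset (Set.union_subset ih (crossE_subset G _)) (colE_subset G _)

lemma colE_finite (i : ℤ) [Finite V] : (colE G i).Finite := (Set.toFinite _).image _

lemma crossE_finite (i : ℤ) [Finite V] : (crossE (V := V) i).Finite := Set.finite_range _

lemma blockE_finite (m : ℕ) [Finite V] : (blockE G m).Finite := by
  induction m with
  | zero => exact colE_finite G 0
  | succ m ih => exact ((ih.union (crossE_finite _)).union (colE_finite G _))

lemma endpointsOf_colE {i : ℤ} {x : ℤ × V} (hx : x ∈ endpointsOf (colE G i)) : x.1 = i := by
  obtain ⟨e, ⟨e', he', rfl⟩, hxe⟩ := hx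
  rw [emb] at hxe
  obtain ⟨y, -, rfl⟩ := Sym2.mem_map.mp hxe
  rfl

lemma endpointsOf_crossE {i : ℤ} {x : ℤ × V} (hx : x ∈ endpointsOf (crossE (V := V) i)) :
    x.1 = i ∨ x.1 = i + 1 := by
  obtain ⟨e, ⟨v, rfl⟩, hxe⟩ := hx
  rw [crossEdge, Sym2.mem_iff] at hxe
  rcases hxe with rfl | rfl
  · exact Or.inl rfl
  · exact Or.inr rfl

lemma endpointsOf_union {F₁ F₂ : Set (Sym2 (ℤ × V))} {x : ℤ × V}
    (hx : x ∈ endpointsOf (F₁ ∪ F₂)) : x ∈ endpointsOf F₁ ∨ x ∈ endpointsOf F₂ := by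
  obtain ⟨e, he | he, hxe⟩ := hx
  · exact Or.inl ⟨e, he, hxe⟩
  · exact Or.inr ⟨e, he, hxe⟩

lemma endpointsOf_blockE {m : ℕ} {x : ℤ × V} (hx : x ∈ endpointsOf (blockE G m)) :
    0 ≤ x.1 ∧ x.1 ≤ (m : ℤ) := by
  induction m with
  | zero =>
    have := endpointsOf_colE G hx
    omega
  | succ m ih =>
    rcases endpointsOf_union hx with hx' | hx'
    · rcases endpointsOf_union hx' with hx'' | hx''
      · have := ih hx''
        push_cast
        omega
      · rcases endpointsOf_crossE hx'' with h1 | h1 <;> (push_cast; omega)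
    · have := endpointsOf_colE G hx'
      push_cast
      omega

end Box


section Events

open SimpleGraph

variable {V : Type*} (G : SimpleGraph V)

/-- The connectedness event. -/
def connSet : Set (Config G) := {ω | (openSubgraph G ω).Connected}

/-- Column `i` is internally connected. -/
def Xev (i : ℤ) : Set (Config (lineLattice.boxProd G)) := res G i ⁻¹' connSet G

/-- Some cross edge between columns `i` and `i + 1` is open. -/
def Yev (i : ℤ) : Set (Config (lineLattice.boxProd G)) :=
  ⋃ v : V, {ω | ω ⟨crossEdge i v, crossEdge_mem G i v⟩ = true}

/-- The block event: columns `0, …, m` are internally connected, and consecutive columns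
are joined by cross edges. -/
def Bev : ℕ → Set (Config (lineLattice.boxProd G))
  | 0 => Xev G 0
  | m + 1 => (Bev m ∩ Yev G (m : ℤ)) ∩ Xev G ((m : ℤ) + 1)

lemma Yev_measurableSet [Finite V] (i : ℤ) : MeasurableSet (Yev G i) := by
  refine MeasurableSet.iUnion fun v => ?_
  show MeasurableSet ((fun ω : Config (lineLattice.boxProd G) =>
    ω ⟨crossEdge i v, crossEdge_mem G i v⟩) ⁻¹' {x | x = true})
  exact measurable_pi_apply _ (by trivial)

lemma Xev_det {i : ℤ} {ω₁ ω₂ : Config (lineLattice.boxProd G)}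
    (hagree : ∀ e : (lineLattice.boxProd G).edgeSet, (e : Sym2 (ℤ × V)) ∈ colE G i →
      ω₁ e = ω₂ e) (h : ω₁ ∈ Xev G i) : ω₂ ∈ Xev G i := by
  have : res G i ω₁ = res G i ω₂ := by
    funext e
    exact hagree ⟨emb i e.1, emb_mem_edgeSet G i e.2⟩ ⟨e.1, e.2, rfl⟩
  rw [Xev, Set.mem_preimage, ← this]
  exact h

lemma Yev_det {i : ℤ} {ω₁ ω₂ : Config (lineLattice.boxProd G)}
    (hagree : ∀ e : (lineLattice.boxProd G).edgeSet, (e : Sym2 (ℤ × V)) ∈ crossE (V := V) i →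
      ω₁ e = ω₂ e) (h : ω₁ ∈ Yev G i) : ω₂ ∈ Yev G i := by
  obtain ⟨s, ⟨v, rfl⟩, hv⟩ := h
  refine ⟨_, ⟨v, rfl⟩, ?_⟩
  show ω₂ _ = true
  rw [← hagree ⟨crossEdge i v, crossEdge_mem G i v⟩ ⟨v, rfl⟩]
  exact hv

lemma Yev_compl_det {i : ℤ} {ω₁ ω₂ : Config (lineLattice.boxProd G)}
    (hagree : ∀ e : (lineLattice.boxProd G).edgeSet, (e : Sym2 (ℤ × V)) ∈ crossE (V := V) i →
      ω₁ e = ω₂ e) (h : ω₁ ∈ (Yev G i)ᶜ) : ω₂ ∈ (Yev G i)ᶜ := by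
  intro h2
  exact h (Yev_det G (fun e he => (hagree e he).symm) h2)

lemma blockE_mono_colE {m : ℕ} {i : ℕ} (hi : i ≤ m) : colE G (i : ℤ) ⊆ blockE G m := by
  induction m with
  | zero =>
    obtain rfl : i = 0 := Nat.le_zero.mp hi
    exact le_refl _
  | succ m ih =>
    rcases Nat.lt_or_ge i (m + 1) with h' | h'
    · exact (ih (by omega)).trans (by intro x hx; exact Or.inl (Or.inl hx))
    · obtain rfl : i = m + 1 := by omega
      intro x hx
      refine Or.inr ?_
      have : ((m : ℤ) + 1) = ((m + 1 : ℕ) : ℤ) := by push_cast; ring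
      rw [this]
      exact hx

lemma blockE_mono_crossE {m : ℕ} {i : ℕ} (hi : i < m) : crossE (V := V) (i : ℤ) ⊆ blockE G m := by
  induction m with
  | zero => omega
  | succ m ih =>
    rcases Nat.lt_or_ge i m with h' | h'
    · exact (ih h').trans (fun x hx => Or.inl (Or.inl hx))
    · obtain rfl : i = m := by omega
      exact fun x hx => Or.inl (Or.inr hx)

lemma Bev_det (m : ℕ) {ω₁ ω₂ : Config (lineLattice.boxProd G)}
    (hagree : ∀ e : (lineLattice.boxProd G).edgeSet, (e : Sym2 (ℤ × V)) ∈ blockE G m →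
      ω₁ e = ω₂ e) (h : ω₁ ∈ Bev G m) : ω₂ ∈ Bev G m := by
  induction m with
  | zero => exact Xev_det G hagree h
  | succ m ih =>
    obtain ⟨⟨h1, h2⟩, h3⟩ := h
    exact ⟨⟨ih (fun e he => hagree e (Or.inl (Or.inl he))) h1,
      Yev_det G (fun e he => hagree e (Or.inl (Or.inr he))) h2⟩,
      Xev_det G (fun e he => hagree e (Or.inr he)) h3⟩

lemma Xev_reachable {i : ℤ} {ω : Config (lineLattice.boxProd G)} (hω : ω ∈ Xev G i)
    (u v : V) : (openSubgraph (lineLattice.boxProd G) ω).Reachable (i, u) (i, v) := by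
  have hc : (openSubgraph G (res G i ω)).Connected := hω
  have hr : (openSubgraph G (res G i ω)).Reachable u v := hc.preconnected u v
  let φ : openSubgraph G (res G i ω) →g openSubgraph (lineLattice.boxProd G) ω := by
    refine ⟨fun w => (i, w), ?_⟩
    intro a b hab
    rw [openSubgraph, SimpleGraph.fromEdgeSet_adj] at hab ⊢
    obtain ⟨⟨he, hop⟩, hne⟩ := hab
    have hmem : s(((i : ℤ), a), (i, b)) ∈ (lineLattice.boxProd G).edgeSet := by
      have := emb_mem_edgeSet G i he
      rwa [emb, Sym2.map_pair_eq] at this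
    have hopen : ω ⟨s((i, a), (i, b)), hmem⟩ = true := by
      have heq : (⟨emb i s(a, b), emb_mem_edgeSet G i he⟩ :
          (lineLattice.boxProd G).edgeSet) = ⟨s((i, a), (i, b)), hmem⟩ :=
        Subtype.ext (by simp [emb, Sym2.map_pair_eq])
      rw [← heq]
      exact hop
    exact ⟨⟨hmem, hopen⟩, by simp [Prod.mk.injEq, hne]⟩
  exact hr.map φ

lemma Yev_adj {i : ℤ} {ω : Config (lineLattice.boxProd G)} (hω : ω ∈ Yev G i) :
    ∃ v : V, (openSubgraph (lineLattice.boxProd G) ω).Adj (i, v) (i + 1, v) := by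
  obtain ⟨s, ⟨v, rfl⟩, hv⟩ := hω
  refine ⟨v, ?_⟩
  rw [openSubgraph, SimpleGraph.fromEdgeSet_adj]
  refine ⟨⟨crossEdge_mem G i v, hv⟩, by simp⟩

lemma Bev_reachable (m : ℕ) {ω : Config (lineLattice.boxProd G)} (hω : ω ∈ Bev G m)
    (u v : V) : (openSubgraph (lineLattice.boxProd G) ω).Reachable (0, u) ((m : ℤ), v) := by
  induction m generalizing v with
  | zero => exact Xev_reachable G hω u v
  | succ m ih =>
    obtain ⟨⟨h1, h2⟩, h3⟩ := hω
    obtain ⟨w, hw⟩ := Yev_adj G h2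
    have r1 : (openSubgraph (lineLattice.boxProd G) ω).Reachable (0, u) ((m : ℤ), w) := ih h1 w
    have r2 := hw.reachable
    have r3 := Xev_reachable G h3 w v
    have : ((m + 1 : ℕ) : ℤ) = (m : ℤ) + 1 := by push_cast; ring
    rw [this]
    exact (r1.trans r2).trans r3

lemma walk_length_ge {ω : Config (lineLattice.boxProd G)} {a b : ℤ × V}
    (w : (openSubgraph (lineLattice.boxProd G) ω).Walk a b) :
    (b.1 - a.1).natAbs ≤ w.length := by
  induction w with
  | nil => simp
  | @cons a c b h q ih =>
    have hadj : (lineLattice.boxProd G).Adj a c :=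
      openSubgraph_le (lineLattice.boxProd G) ω h
    have h1 : (c.1 - a.1).natAbs ≤ 1 := by
      rcases SimpleGraph.boxProd_adj.mp hadj with ⟨hl, -⟩ | ⟨-, he⟩
      · rw [lineLattice, SimpleGraph.fromRel_adj] at hl
        omega
      · rw [he]
        simp
    rw [SimpleGraph.Walk.length_cons]
    omega

lemma exists_path_length {W : Type*} {Γ : SimpleGraph W} {a b : W} (w : Γ.Walk a b)
    (hw : w.IsPath) : ∀ n, n ≤ w.length →
      ∃ u v, ∃ q : Γ.Walk u v, q.IsPath ∧ q.length = n := by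
  induction w with
  | nil =>
    intro n hn
    obtain rfl : n = 0 := by simpa using hn
    exact ⟨_, _, SimpleGraph.Walk.nil' a, SimpleGraph.Walk.IsPath.nil, by simp⟩
  | @cons a c b h q ih =>
    intro n hn
    rcases Nat.lt_or_ge n (q.length + 1) with h' | h'
    · exact ih hw.of_cons n (by omega)
    · rw [SimpleGraph.Walk.length_cons] at hn
      refine ⟨a, b, SimpleGraph.Walk.cons h q, hw, ?_⟩
      rw [SimpleGraph.Walk.length_cons]
      omega

lemma Bev_hasOpenPath [Nonempty V] (n : ℕ) {ω : Config (lineLattice.boxProd G)}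
    (hω : ω ∈ Bev G n) : HasOpenPathOfLength (lineLattice.boxProd G) ω n := by
  classical
  obtain ⟨v₀⟩ := ‹Nonempty V›
  obtain ⟨w⟩ := Bev_reachable G n hω v₀ v₀
  have hlen : n ≤ w.bypass.length := by
    have := walk_length_ge G w.bypass
    simpa using this
  obtain ⟨u, v, q, hq, hqlen⟩ := exists_path_length w.bypass w.bypass_isPath n hlen
  exact ⟨u, v, q, hq, hqlen⟩

end Events


section Meas

open SimpleGraph

variable {V : Type*}

lemma measurableSet_edgeOpen {G : SimpleGraph V} (e : G.edgeSet) :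
    MeasurableSet {ω : Config G | ω e = true} := by
  show MeasurableSet ((fun ω : Config G => ω e) ⁻¹' {x | x = true})
  exact measurable_pi_apply _ (by trivial)

lemma kIndepMeasure_dirac (G : SimpleGraph V) (ω₀ : Config G) :
    KIndepMeasure G 1 (Measure.dirac ω₀) := by
  intro F₁ F₂ _ _ _
  rw [Indep_iff]
  intro t1 t2 h1 h2
  have m1 := cylinderSigma_le G F₁ h1
  have m2 := cylinderSigma_le G F₂ h2
  rw [Measure.dirac_apply' _ m1, Measure.dirac_apply' _ m2,
    Measure.dirac_apply' _ (m1.inter m2)]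
  by_cases hh1 : ω₀ ∈ t1 <;> by_cases hh2 : ω₀ ∈ t2 <;>
    simp [Set.indicator_apply, hh1, hh2, Set.mem_inter_iff]

lemma dirac_mem_MGe (G : SimpleGraph V) {p : ℝ} (hp : p ≤ 1) :
    Measure.dirac (fun _ => true : Config G) ∈ MGe G 1 p := by
  refine ⟨Measure.dirac.isProbabilityMeasure, kIndepMeasure_dirac G _, fun e => ?_⟩
  rw [Measure.dirac_apply' _ (measurableSet_edgeOpen e)]
  have : (fun _ => true : Config G) ∈ {ω : Config G | ω e = true} := rfl
  rw [Set.indicator_of_mem this]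
  exact (ENNReal.ofReal_le_one.mpr hp).trans (by norm_num)

lemma conn_prob_one (G : SimpleGraph V) [Fintype V] (hconn : G.Connected)
    {μ : Measure (Config G)} (hμ : μ ∈ MGe G 1 1) :
    μ {ω | (openSubgraph G ω).Connected} = 1 := by
  obtain ⟨hprob, -, hedge⟩ := hμ
  haveI := hprob
  classical
  have hone : ∀ e : G.edgeSet, μ {ω | ω e = true} = 1 := fun e =>
    le_antisymm prob_le_one (by simpa using hedge e)
  have hset : μ (⋂ e : G.edgeSet, {ω : Config G | ω e = true}) = 1 := by
    rw [← prob_compl_eq_zero_iff (MeasurableSet.iInter fun e => measurableSet_edgeOpen e)]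
    rw [Set.compl_iInter]
    refine measure_iUnion_null fun e => ?_
    rw [measure_compl (measurableSet_edgeOpen e) (measure_ne_top μ _), hone e, measure_univ]
    simp
  refine le_antisymm prob_le_one ?_
  rw [← hset]
  refine measure_mono fun ω hω => ?_
  have hall : ∀ e : G.edgeSet, ω e = true := fun e => Set.mem_iInter.mp hω e
  exact hconn.mono (le_openSubgraph G ω hall)

lemma connFun_nonneg (G : SimpleGraph V) (k : ℕ) (p : ℝ) : 0 ≤ connFun G k p :=
  Real.sInf_nonneg (by rintro x ⟨μ, hμ, rfl⟩; exact ENNReal.toReal_nonneg)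

lemma connFun_le (G : SimpleGraph V) {k : ℕ} {p : ℝ} {μ : Measure (Config G)}
    (hμ : μ ∈ MGe G k p) :
    connFun G k p ≤ (μ {ω | (openSubgraph G ω).Connected}).toReal :=
  csInf_le ⟨0, by rintro x ⟨ν, hν, rfl⟩; exact ENNReal.toReal_nonneg⟩ ⟨μ, hμ, rfl⟩

lemma connFun_pos (G : SimpleGraph V) [Fintype V] (hconn : G.Connected) {p : ℝ}
    (hp : p ∈ Set.Icc (0 : ℝ) 1)
    (h : 4 * (1 - p) ^ Fintype.card V ≤ connFun G 1 p ^ 2) : 0 < connFun G 1 p := by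
  rcases lt_or_eq_of_le hp.2 with hlt | heq
  · have h1 : 0 < (1 - p) ^ Fintype.card V := pow_pos (by linarith) _
    have h2 : 0 ≤ connFun G 1 p := connFun_nonneg G 1 p
    nlinarith
  · subst heq
    have h1 : (1 : ℝ) ≤ connFun G 1 1 := by
      apply le_csInf
      · exact ⟨_, ⟨_, dirac_mem_MGe G le_rfl, rfl⟩⟩
      · rintro x ⟨μ, hμ, rfl⟩
        rw [conn_prob_one G hconn hμ]
        simp
    linarith

lemma map_res_mem_MGe (G : SimpleGraph V) [Fintype V] {p : ℝ}
    {μ : Measure (Config (lineLattice.boxProd G))} (hprob : IsProbabilityMeasure μ)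
    (hind : KIndepMeasure (lineLattice.boxProd G) 1 μ)
    (hedge : ∀ e : (lineLattice.boxProd G).edgeSet, ENNReal.ofReal p ≤ μ {ω | ω e = true})
    (i : ℤ) : μ.map (res G i) ∈ MGe G 1 p := by
  classical
  refine ⟨Measure.isProbabilityMeasure_map (res_measurable G i).aemeasurable, ?_, ?_⟩
  · intro F₁ F₂ h₁ h₂ hd
    rw [Indep_iff]
    intro t1 t2 ht1 ht2
    rw [Measure.map_apply (res_measurable G i) (measurableSet_all _),
        Measure.map_apply (res_measurable G i) (measurableSet_all _),
        Measure.map_apply (res_measurable G i) (measurableSet_all _), Set.preimage_inter]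
    refine kIndep_apply hind (F₁ := emb i '' F₁) (F₂ := emb i '' F₂) ?_ ?_ ?_ ?_ ?_ ?_ ?_
    · rintro e ⟨e', he', rfl⟩; exact emb_mem_edgeSet G i (h₁ he')
    · rintro e ⟨e', he', rfl⟩; exact emb_mem_edgeSet G i (h₂ he')
    · apply kDistant_one
      intro x hx y hy heq
      obtain ⟨e, ⟨e', he', rfl⟩, hxe⟩ := hx
      obtain ⟨d, ⟨d', hd', rfl⟩, hyd⟩ := hy
      obtain ⟨xu, hxu, hfx⟩ := Sym2.mem_map.mp hxe
      obtain ⟨yu, hyu, hfy⟩ := Sym2.mem_map.mp hyd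
      subst heq
      rw [← hfx] at hfy
      have hyx : yu = xu := by
        have := congrArg Prod.snd hfy
        simpa using this
      subst hyx
      exact kDistant_ne hd ⟨e', he', hxu⟩ ⟨d', hd', hyu⟩
    · exact ((Set.toFinite G.edgeSet).subset h₁).image _
    · exact ((Set.toFinite G.edgeSet).subset h₂).image _
    · intro ω₁ ω₂ hagree hmem
      exact cylinderSigma_determined ht1
        (fun e he => hagree ⟨emb i e.1, emb_mem_edgeSet G i e.2⟩ ⟨e.1, he, rfl⟩) hmem
    · intro ω₁ ω₂ hagree hmem
      exact cylinderSigma_determined ht2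
        (fun e he => hagree ⟨emb i e.1, emb_mem_edgeSet G i e.2⟩ ⟨e.1, he, rfl⟩) hmem
  · intro e
    rw [Measure.map_apply (res_measurable G i) (measurableSet_all _)]
    exact hedge ⟨emb i e.1, emb_mem_edgeSet G i e.2⟩

lemma crossClosed_bound (G : SimpleGraph V) [Fintype V] {p : ℝ} (hp0 : 0 ≤ p) (hp1 : p ≤ 1)
    {μ : Measure (Config (lineLattice.boxProd G))} (hprob : IsProbabilityMeasure μ)
    (hind : KIndepMeasure (lineLattice.boxProd G) 1 μ)
    (hedge : ∀ e : (lineLattice.boxProd G).edgeSet, ENNReal.ofReal p ≤ μ {ω | ω e = true})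
    (i : ℤ) : μ ((Yev G i)ᶜ) ≤ ENNReal.ofReal ((1 - p) ^ Fintype.card V) := by
  classical
  have key : ∀ S : Finset V,
      μ {ω | ∀ v ∈ S, ω ⟨crossEdge i v, crossEdge_mem G i v⟩ = false}
        ≤ ENNReal.ofReal ((1 - p) ^ S.card) := by
    intro S
    induction S using Finset.induction_on with
    | empty =>
      have : {ω : Config (lineLattice.boxProd G) |
          ∀ v ∈ (∅ : Finset V), ω ⟨crossEdge i v, crossEdge_mem G i v⟩ = false} = Set.univ := by
        ext ω; simp
      rw [this, measure_univ, Finset.card_empty, pow_zero, ENNReal.ofReal_one]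
    | @insert a S ha ih =>
      have hsplit : {ω : Config (lineLattice.boxProd G) |
          ∀ v ∈ insert a S, ω ⟨crossEdge i v, crossEdge_mem G i v⟩ = false}
          = {ω | ω ⟨crossEdge i a, crossEdge_mem G i a⟩ = false}
            ∩ {ω | ∀ v ∈ S, ω ⟨crossEdge i v, crossEdge_mem G i v⟩ = false} := by
        ext ω
        simp [Finset.forall_mem_insert]
      have hprodeq : μ ({ω | ω ⟨crossEdge i a, crossEdge_mem G i a⟩ = false}
            ∩ {ω | ∀ v ∈ S, ω ⟨crossEdge i v, crossEdge_mem G i v⟩ = false})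
          = μ {ω | ω ⟨crossEdge i a, crossEdge_mem G i a⟩ = false}
            * μ {ω | ∀ v ∈ S, ω ⟨crossEdge i v, crossEdge_mem G i v⟩ = false} := by
        refine kIndep_apply hind (F₁ := {crossEdge i a})
          (F₂ := crossEdge i '' (S : Set V)) ?_ ?_ ?_ ?_ ?_ ?_ ?_
        · rintro e rfl
          exact crossEdge_mem G i a
        · rintro e ⟨v, -, rfl⟩
          exact crossEdge_mem G i v
        · apply kDistant_one
          intro x hx y hy heq
          obtain ⟨e, rfl, hxe⟩ := hx
          obtain ⟨d, ⟨v, hv, rfl⟩, hyd⟩ := hy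
          have hx2 : x.2 = a := by
            rw [crossEdge, Sym2.mem_iff] at hxe
            rcases hxe with rfl | rfl <;> rfl
          have hy2 : y.2 = v := by
            rw [crossEdge, Sym2.mem_iff] at hyd
            rcases hyd with rfl | rfl <;> rfl
          rw [heq, hy2] at hx2
          rw [hx2] at hv
          exact ha hv
        · exact Set.finite_singleton _
        · exact (Set.toFinite _).image _
        · intro ω₁ ω₂ hagree hmem
          show ω₂ _ = false
          rw [← hagree ⟨crossEdge i a, crossEdge_mem G i a⟩ rfl]
          exact hmem
        · intro ω₁ ω₂ hagree hmem v hv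
          show ω₂ _ = false
          rw [← hagree ⟨crossEdge i v, crossEdge_mem G i v⟩ ⟨v, hv, rfl⟩]
          exact hmem v hv
      have hsingle : μ {ω : Config (lineLattice.boxProd G) |
          ω ⟨crossEdge i a, crossEdge_mem G i a⟩ = false} ≤ ENNReal.ofReal (1 - p) := by
        have hcompl : {ω : Config (lineLattice.boxProd G) |
            ω ⟨crossEdge i a, crossEdge_mem G i a⟩ = false}
            = {ω : Config (lineLattice.boxProd G) |
                ω ⟨crossEdge i a, crossEdge_mem G i a⟩ = true}ᶜ := by
          ext ω; simp
        rw [hcompl, measure_compl (measurableSet_edgeOpen _) (measure_ne_top μ _), measure_univ]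
        calc (1 : ENNReal) - μ {ω | ω ⟨crossEdge i a, crossEdge_mem G i a⟩ = true}
            ≤ 1 - ENNReal.ofReal p := tsub_le_tsub_left (hedge _) 1
          _ = ENNReal.ofReal (1 - p) := by
              rw [ENNReal.ofReal_sub 1 hp0, ENNReal.ofReal_one]
      calc μ {ω : Config (lineLattice.boxProd G) |
            ∀ v ∈ insert a S, ω ⟨crossEdge i v, crossEdge_mem G i v⟩ = false}
          = μ {ω | ω ⟨crossEdge i a, crossEdge_mem G i a⟩ = false}
            * μ {ω | ∀ v ∈ S, ω ⟨crossEdge i v, crossEdge_mem G i v⟩ = false} := by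
            rw [hsplit, hprodeq]
        _ ≤ ENNReal.ofReal (1 - p) * ENNReal.ofReal ((1 - p) ^ S.card) := mul_le_mul' hsingle ih
        _ = ENNReal.ofReal ((1 - p) ^ (insert a S).card) := by
            rw [← ENNReal.ofReal_mul (by linarith : (0:ℝ) ≤ 1 - p), ← pow_succ',
              Finset.card_insert_of_notMem ha]
  have hYc : (Yev G i)ᶜ = {ω : Config (lineLattice.boxProd G) |
      ∀ v ∈ (Finset.univ : Finset V), ω ⟨crossEdge i v, crossEdge_mem G i v⟩ = false} := by
    ext ω
    simp [Yev]
  rw [hYc]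
  have := key Finset.univ
  rwa [Finset.card_univ] at this

end Meas


lemma arith1 {b0 x1 d B1 PA f : ℝ} (e1 : B1 = PA - d) (e2 : PA = b0 * x1)
    (e3 : d ≤ f ^ 2 / 4) (t1 : b0 * f ≤ b0 * x1) (t2 : f / 2 * f ≤ f / 2 * b0)
    (hsq : 0 ≤ f ^ 2) : f / 2 * b0 ≤ B1 := by linarith

lemma arith2 {b0 b1 x d B2 PA yc f : ℝ} (e1 : B2 = PA - d) (e2 : PA = b1 * x)
    (e3 : d ≤ b0 * yc) (e4 : b0 * yc ≤ b0 * (f ^ 2 / 4)) (t1 : b1 * f ≤ b1 * x)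
    (t2 : f / 2 * b0 * (f / 2) ≤ b1 * (f / 2)) : f / 2 * b1 ≤ B2 := by
  have t3 : b0 * (f ^ 2 / 4) = f / 2 * b0 * (f / 2) := by ring
  linarith

theorem longPathsCrit_boxProd_le {V : Type*} [Fintype V] (G : SimpleGraph V)
    (hconn : G.Connected) (p : ℝ) (hp : p ∈ Set.Icc (0:ℝ) 1)
    (h : 4 * (1 - p) ^ (Fintype.card V) ≤ connFun G 1 p ^ 2) :
    longPathsCrit (lineLattice.boxProd G) ≤ p := by
  classical
  haveI hVne : Nonempty V := hconn.nonempty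
  set f := connFun G 1 p with hfdef
  have hf0 : 0 < f := connFun_pos G hconn hp h
  clear_value f
  refine csInf_le ⟨0, fun x hx => hx.1.1⟩ ⟨hp, ?_⟩
  intro μ hμ n
  obtain ⟨hprob, hind, hedge⟩ := hμ
  haveI := hprob
  -- connectivity of each column has probability at least f
  have hX : ∀ i : ℤ, f ≤ (μ (Xev G i)).toReal := by
    intro i
    have h1 := connFun_le G (map_res_mem_MGe G hprob hind hedge i)
    rw [Measure.map_apply (res_measurable G i) (measurableSet_all _)] at h1
    rw [hfdef]
    exact h1
  -- the probability that all cross edges between two columns are closed is small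
  have hY : ∀ i : ℤ, (μ ((Yev G i)ᶜ)).toReal ≤ f ^ 2 / 4 := by
    intro i
    have h1 := crossClosed_bound G hp.1 hp.2 hprob hind hedge i
    have h2 : (μ ((Yev G i)ᶜ)).toReal ≤ (1 - p) ^ Fintype.card V := by
      rw [← ENNReal.toReal_ofReal (pow_nonneg (by linarith [hp.2]) (Fintype.card V) :
        (0:ℝ) ≤ (1 - p) ^ Fintype.card V)]
      exact ENNReal.toReal_mono ENNReal.ofReal_ne_top h1
    linarith
  -- independence identities
  have hprod1 : ∀ m : ℕ, μ (Bev G m ∩ Xev G ((m : ℤ) + 1))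
      = μ (Bev G m) * μ (Xev G ((m : ℤ) + 1)) := by
    intro m
    refine kIndep_apply hind (F₁ := blockE G m) (F₂ := colE G ((m : ℤ) + 1))
      (blockE_subset G m) (colE_subset G _) ?_ (blockE_finite G m) (colE_finite G _)
      (fun ω₁ ω₂ ha hm => Bev_det G m ha hm) (fun ω₁ ω₂ ha hm => Xev_det G ha hm)
    apply kDistant_one
    intro x hx y hy heq
    have h1 := endpointsOf_blockE G hx
    have h2 := endpointsOf_colE G hy
    rw [heq] at h1
    omega
  have hprod2 : ∀ m : ℕ, μ (Bev G m ∩ (Yev G ((m + 1 : ℕ) : ℤ))ᶜ)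
      = μ (Bev G m) * μ ((Yev G ((m + 1 : ℕ) : ℤ))ᶜ) := by
    intro m
    refine kIndep_apply hind (F₁ := blockE G m) (F₂ := crossE (V := V) ((m + 1 : ℕ) : ℤ))
      (blockE_subset G m) (crossE_subset G _) ?_ (blockE_finite G m) (crossE_finite _)
      (fun ω₁ ω₂ ha hm => Bev_det G m ha hm) (fun ω₁ ω₂ ha hm => Yev_compl_det G ha hm)
    apply kDistant_one
    intro x hx y hy heq
    have h1 := endpointsOf_blockE G hx
    have h2 := endpointsOf_crossE hy
    rw [heq] at h1
    push_cast at h1 h2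
    omega
  -- decomposition of a measure along the cross event
  have hsub : ∀ (A : Set (Config (lineLattice.boxProd G))) (i : ℤ),
      (μ (A ∩ Yev G i)).toReal = (μ A).toReal - (μ (A \ Yev G i)).toReal := by
    intro A i
    have h1 := measure_inter_add_diff (μ := μ) A (Yev_measurableSet G i)
    have h2 : (μ (A ∩ Yev G i)).toReal + (μ (A \ Yev G i)).toReal = (μ A).toReal := by
      rw [← ENNReal.toReal_add (measure_ne_top μ _) (measure_ne_top μ _), h1]
    linarith
  have hBmono : ∀ m : ℕ, Bev G (m + 1) ⊆ Bev G m := fun m ω hω => hω.1.1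
  -- the key recursion
  have hstep : ∀ m : ℕ, f / 2 * (μ (Bev G m)).toReal ≤ (μ (Bev G (m + 1))).toReal := by
    intro m
    induction m with
    | zero =>
      show f / 2 * (μ (Bev G 0)).toReal ≤ (μ (Bev G 1)).toReal
      have hB1 : Bev G 1 = (Bev G 0 ∩ Xev G (((0 : ℕ) : ℤ) + 1)) ∩ Yev G ((0 : ℕ) : ℤ) := by
        show (Bev G 0 ∩ Yev G ((0 : ℕ) : ℤ)) ∩ Xev G (((0 : ℕ) : ℤ) + 1) = _
        rw [Set.inter_right_comm]
      have e1 : (μ (Bev G 1)).toReal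
          = (μ (Bev G 0 ∩ Xev G (((0 : ℕ) : ℤ) + 1))).toReal
            - (μ ((Bev G 0 ∩ Xev G (((0 : ℕ) : ℤ) + 1)) \ Yev G ((0 : ℕ) : ℤ))).toReal := by
        rw [hB1, hsub]
      have e2 : (μ (Bev G 0 ∩ Xev G (((0 : ℕ) : ℤ) + 1))).toReal
          = (μ (Bev G 0)).toReal * (μ (Xev G (((0 : ℕ) : ℤ) + 1))).toReal := by
        rw [hprod1 0, ENNReal.toReal_mul]
      have e3 : (μ ((Bev G 0 ∩ Xev G (((0 : ℕ) : ℤ) + 1)) \ Yev G ((0 : ℕ) : ℤ))).toReal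
          ≤ f ^ 2 / 4 := by
        refine le_trans ?_ (hY ((0 : ℕ) : ℤ))
        exact ENNReal.toReal_mono (measure_ne_top μ _)
          (measure_mono (fun ω hω => hω.2))
      have hb0 : f ≤ (μ (Bev G 0)).toReal := hX 0
      have hx1 : f ≤ (μ (Xev G (((0 : ℕ) : ℤ) + 1))).toReal := hX _
      have hb0nn : (0:ℝ) ≤ (μ (Bev G 0)).toReal := ENNReal.toReal_nonneg
      have t1 : (μ (Bev G 0)).toReal * f
          ≤ (μ (Bev G 0)).toReal * (μ (Xev G (((0 : ℕ) : ℤ) + 1))).toReal :=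
        mul_le_mul_of_nonneg_left hx1 hb0nn
      have t2 : f / 2 * f ≤ f / 2 * (μ (Bev G 0)).toReal :=
        mul_le_mul_of_nonneg_left hb0 (by linarith)
      exact arith1 e1 e2 e3 t1 t2 (sq_nonneg f)
    | succ m ih =>
      have hB2 : Bev G (m + 1 + 1) = (Bev G (m + 1) ∩ Xev G (((m + 1 : ℕ) : ℤ) + 1))
          ∩ Yev G ((m + 1 : ℕ) : ℤ) := by
        show (Bev G (m + 1) ∩ Yev G ((m + 1 : ℕ) : ℤ))
          ∩ Xev G (((m + 1 : ℕ) : ℤ) + 1) = _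
        rw [Set.inter_right_comm]
      have e1 : (μ (Bev G (m + 1 + 1))).toReal
          = (μ (Bev G (m + 1) ∩ Xev G (((m + 1 : ℕ) : ℤ) + 1))).toReal
            - (μ ((Bev G (m + 1) ∩ Xev G (((m + 1 : ℕ) : ℤ) + 1))
                \ Yev G ((m + 1 : ℕ) : ℤ))).toReal := by
        rw [hB2, hsub]
      have e2 : (μ (Bev G (m + 1) ∩ Xev G (((m + 1 : ℕ) : ℤ) + 1))).toReal
          = (μ (Bev G (m + 1))).toReal * (μ (Xev G (((m + 1 : ℕ) : ℤ) + 1))).toReal := by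
        rw [hprod1 (m + 1), ENNReal.toReal_mul]
      have e3 : (μ ((Bev G (m + 1) ∩ Xev G (((m + 1 : ℕ) : ℤ) + 1))
            \ Yev G ((m + 1 : ℕ) : ℤ))).toReal
          ≤ (μ (Bev G m)).toReal * (μ ((Yev G ((m + 1 : ℕ) : ℤ))ᶜ)).toReal := by
        rw [← ENNReal.toReal_mul, ← hprod2 m]
        refine ENNReal.toReal_mono (measure_ne_top μ _) (measure_mono ?_)
        intro ω hω
        exact ⟨hBmono m hω.1.1, hω.2⟩
      have e4 : (μ (Bev G m)).toReal * (μ ((Yev G ((m + 1 : ℕ) : ℤ))ᶜ)).toReal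
          ≤ (μ (Bev G m)).toReal * (f ^ 2 / 4) :=
        mul_le_mul_of_nonneg_left (hY _) ENNReal.toReal_nonneg
      have hx1 : f ≤ (μ (Xev G (((m + 1 : ℕ) : ℤ) + 1))).toReal := hX _
      have hb1nn : (0:ℝ) ≤ (μ (Bev G (m + 1))).toReal := ENNReal.toReal_nonneg
      have t1 : (μ (Bev G (m + 1))).toReal * f
          ≤ (μ (Bev G (m + 1))).toReal * (μ (Xev G (((m + 1 : ℕ) : ℤ) + 1))).toReal :=
        mul_le_mul_of_nonneg_left hx1 hb1nn
      have t2 : (f / 2 * (μ (Bev G m)).toReal) * (f / 2)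
          ≤ (μ (Bev G (m + 1))).toReal * (f / 2) :=
        mul_le_mul_of_nonneg_right ih (by linarith)
      exact arith2 e1 e2 e3 e4 t1 t2
  -- positivity of the block events
  have hpos : ∀ m : ℕ, 0 < (μ (Bev G m)).toReal := by
    intro m
    induction m with
    | zero => exact lt_of_lt_of_le hf0 (hX 0)
    | succ m ih =>
      calc (0:ℝ) < f / 2 * (μ (Bev G m)).toReal := mul_pos (by linarith) ih
        _ ≤ (μ (Bev G (m + 1))).toReal := hstep m
  -- conclusion
  have hsubset : Bev G n ⊆ {ω | HasOpenPathOfLength (lineLattice.boxProd G) ω n} :=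
    fun ω hω => Bev_hasOpenPath G n hω
  have hne : μ (Bev G n) ≠ 0 := by
    intro h0
    have := hpos n
    rw [h0] at this
    simp at this
  exact lt_of_lt_of_le (pos_iff_ne_zero.mpr hne) (measure_mono hsubset)

end OneIndep
end

section
/- For all p ∈ [0,1], the 1-independent connectivity function of the 4-cycle satisfies f_{1,C₄}(p) = 2p − 1 for p ∈ [1/2, 1], and f_{1,C₄}(p) = 0 for p ∈ [0, 1/2]. -/
open MeasureTheory ProbabilityTheory

namespace OneIndep

variable {V : Type*}

abbrev G4 : SimpleGraph (Fin 4) := SimpleGraph.cycleGraph 4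


example : Finite (Config G4) := by infer_instance
example : MeasurableSingletonClass (Config G4) := by infer_instance
lemma measAll (s : Set (Config G4)) : MeasurableSet s := s.toFinite.measurableSet

lemma cylinderSigma_empty (G : SimpleGraph V) : cylinderSigma G (∅ : Set (Sym2 V)) = ⊥ := by
  haveI : IsEmpty {e : G.edgeSet // (e : Sym2 V) ∈ (∅ : Set (Sym2 V))} := ⟨fun x => x.2⟩
  haveI : Subsingleton ({e : G.edgeSet // (e : Sym2 V) ∈ (∅ : Set (Sym2 V))} → Bool) :=
    ⟨fun f g => funext fun x => isEmptyElim x⟩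
  apply le_bot_iff.mp
  rintro s ⟨S, -, rfl⟩
  rw [MeasurableSpace.measurableSet_bot_iff]
  by_cases h : (fun x : {e : G.edgeSet // (e : Sym2 V) ∈ (∅ : Set (Sym2 V))} => (isEmptyElim x : Bool)) ∈ S
  · right
    ext ω
    simp only [Set.mem_preimage, Set.mem_univ, iff_true]
    have he : (fun e : {e : G.edgeSet // (e : Sym2 V) ∈ (∅ : Set (Sym2 V))} => ω e)
        = (fun x => (isEmptyElim x : Bool)) := Subsingleton.elim _ _
    rw [he]; exact h
  · left
    ext ω
    simp only [Set.mem_preimage, Set.mem_empty_iff_false, iff_false]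
    intro hω
    have he : (fun e : {e : G.edgeSet // (e : Sym2 V) ∈ (∅ : Set (Sym2 V))} => ω e)
        = (fun x => (isEmptyElim x : Bool)) := Subsingleton.elim _ _
    rw [he] at hω; exact h hω


lemma cylinderSigma_singleton (G : SimpleGraph V) {e : Sym2 V} (he : e ∈ G.edgeSet) :
    cylinderSigma G ({e} : Set (Sym2 V)) =
      MeasurableSpace.generateFrom {{ω : Config G | ω ⟨e, he⟩ = true}} := by
  have hx : ∀ x : {e' : G.edgeSet // (e' : Sym2 V) ∈ ({e} : Set (Sym2 V))},
      x.1 = ⟨e, he⟩ := fun x => Subtype.ext x.2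
  apply le_antisymm
  · rintro s ⟨S, -, rfl⟩
    have hf : ∀ ω : Config G,
        (fun x : {e' : G.edgeSet // (e' : Sym2 V) ∈ ({e} : Set (Sym2 V))} => ω x.1)
          = fun _ => ω ⟨e, he⟩ := fun ω => funext fun x => by rw [hx x]
    by_cases hT : (fun _ : {e' : G.edgeSet // (e' : Sym2 V) ∈ ({e} : Set (Sym2 V))} => true) ∈ S <;>
      by_cases hF : (fun _ : {e' : G.edgeSet // (e' : Sym2 V) ∈ ({e} : Set (Sym2 V))} => false) ∈ S
    · have huniv : (fun (ω : Config G)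
          (x : {e' : G.edgeSet // (e' : Sym2 V) ∈ ({e} : Set (Sym2 V))}) => ω x.1) ⁻¹' S
            = Set.univ := by
        ext ω
        simp only [Set.mem_preimage, Set.mem_univ, iff_true]
        rw [hf ω]
        cases hb : ω ⟨e, he⟩ <;> assumption
      rw [huniv]
      exact @MeasurableSet.univ _ (MeasurableSpace.generateFrom {{ω : Config G | ω ⟨e, he⟩ = true}})
    · have hE : (fun (ω : Config G)
          (x : {e' : G.edgeSet // (e' : Sym2 V) ∈ ({e} : Set (Sym2 V))}) => ω x.1) ⁻¹' S
            = {ω : Config G | ω ⟨e, he⟩ = true} := by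
        ext ω
        simp only [Set.mem_preimage, Set.mem_setOf_eq]
        rw [hf ω]
        cases hb : ω ⟨e, he⟩ <;> simp [hT, hF]
      rw [hE]
      exact MeasurableSpace.measurableSet_generateFrom rfl
    · have hE : (fun (ω : Config G)
          (x : {e' : G.edgeSet // (e' : Sym2 V) ∈ ({e} : Set (Sym2 V))}) => ω x.1) ⁻¹' S
            = {ω : Config G | ω ⟨e, he⟩ = true}ᶜ := by
        ext ω
        simp only [Set.mem_preimage, Set.mem_compl_iff, Set.mem_setOf_eq]
        rw [hf ω]
        cases hb : ω ⟨e, he⟩ <;> simp [hT, hF]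
      rw [hE]
      have hbm : MeasurableSet[MeasurableSpace.generateFrom {{ω : Config G | ω ⟨e, he⟩ = true}}]
          {ω : Config G | ω ⟨e, he⟩ = true} := MeasurableSpace.measurableSet_generateFrom rfl
      exact hbm.compl
    · have hE : (fun (ω : Config G)
          (x : {e' : G.edgeSet // (e' : Sym2 V) ∈ ({e} : Set (Sym2 V))}) => ω x.1) ⁻¹' S
            = ∅ := by
        ext ω
        simp only [Set.mem_preimage, Set.mem_empty_iff_false, iff_false]
        rw [hf ω]
        cases hb : ω ⟨e, he⟩ <;> assumption
      rw [hE]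
      exact @MeasurableSet.empty _ (MeasurableSpace.generateFrom {{ω : Config G | ω ⟨e, he⟩ = true}})
  · apply MeasurableSpace.generateFrom_le
    rintro s rfl
    refine ⟨(fun g : {e' : G.edgeSet // (e' : Sym2 V) ∈ ({e} : Set (Sym2 V))} → Bool =>
      g ⟨⟨e, he⟩, rfl⟩) ⁻¹' {true}, ?_, rfl⟩
    exact measurable_pi_apply _ (show MeasurableSet ({true} : Set Bool) from trivial)

lemma walk_closure {W : Type*} {H : SimpleGraph W} {S : Set W}
    (hcl : ∀ a b, a ∈ S → H.Adj a b → b ∈ S) {u v : W} (w : H.Walk u v) (hu : u ∈ S) :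
    v ∈ S := by
  induction w with
  | nil => exact hu
  | cons h _ ih => exact ih (hcl _ _ hu h)

lemma not_connected_of {W : Type*} {H : SimpleGraph W} (S : Set W) (u v : W)
    (hu : u ∈ S) (hv : v ∉ S) (hcl : ∀ a b, a ∈ S → H.Adj a b → b ∈ S) : ¬ H.Connected := by
  intro h
  obtain ⟨w⟩ := h.preconnected u v
  exact hv (walk_closure hcl w hu)

lemma connected_of_path {H : SimpleGraph (Fin 4)} (a b c d : Fin 4)
    (hab : H.Adj a b) (hbc : H.Adj b c) (hcd : H.Adj c d)
    (hcov : ∀ x, x = a ∨ x = b ∨ x = c ∨ x = d) : H.Connected := by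
  have r : ∀ x, H.Reachable a x := by
    intro x
    rcases hcov x with rfl | rfl | rfl | rfl
    · exact SimpleGraph.Reachable.refl _
    · exact hab.reachable
    · exact hab.reachable.trans hbc.reachable
    · exact (hab.reachable.trans hbc.reachable).trans hcd.reachable
  exact ⟨fun x y => (r x).symm.trans (r y)⟩

lemma he1 : (s(0,1) : Sym2 (Fin 4)) ∈ G4.edgeSet := by decide
lemma he2 : (s(1,2) : Sym2 (Fin 4)) ∈ G4.edgeSet := by decide
lemma he3 : (s(2,3) : Sym2 (Fin 4)) ∈ G4.edgeSet := by decide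
lemma he4 : (s(0,3) : Sym2 (Fin 4)) ∈ G4.edgeSet := by decide

def x1 : G4.edgeSet := ⟨s(0,1), he1⟩
def x2 : G4.edgeSet := ⟨s(1,2), he2⟩
def x3 : G4.edgeSet := ⟨s(2,3), he3⟩
def x4 : G4.edgeSet := ⟨s(0,3), he4⟩

lemma edges4 : ∀ e ∈ G4.edgeSet, e = s(0,1) ∨ e = s(1,2) ∨ e = s(2,3) ∨ e = s(0,3) := by
  intro e
  induction e using Sym2.ind with
  | _ x y => rw [SimpleGraph.mem_edgeSet]; revert x y; decide

lemma edgeSet4 : ∀ e : G4.edgeSet, e = x1 ∨ e = x2 ∨ e = x3 ∨ e = x4 := by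
  rintro ⟨e, he⟩
  rcases edges4 e he with rfl | rfl | rfl | rfl
  · exact Or.inl rfl
  · exact Or.inr (Or.inl rfl)
  · exact Or.inr (Or.inr (Or.inl rfl))
  · exact Or.inr (Or.inr (Or.inr rfl))

lemma openSubgraph_adj_of {ω : Config G4} {a b : Fin 4} (h : G4.Adj a b)
    (hω : ω ⟨s(a,b), h⟩ = true) : (openSubgraph G4 ω).Adj a b := by
  rw [openSubgraph, SimpleGraph.fromEdgeSet_adj]
  exact ⟨⟨h, hω⟩, h.ne⟩

/-- If edges `s(0,1)`, `s(1,2)`, `s(2,3)` are open, the subgraph is connected. -/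
lemma conn123 {ω : Config G4} (h1 : ω x1 = true) (h2 : ω x2 = true) (h3 : ω x3 = true) :
    (openSubgraph G4 ω).Connected :=
  connected_of_path 0 1 2 3 (openSubgraph_adj_of (by decide) h1)
    (openSubgraph_adj_of (by decide) h2) (openSubgraph_adj_of (by decide) h3) (by decide)

lemma conn134 {ω : Config G4} (h1 : ω x1 = true) (h3 : ω x3 = true) (h4 : ω x4 = true) :
    (openSubgraph G4 ω).Connected :=
  connected_of_path 1 0 3 2 (openSubgraph_adj_of (by decide) h1).symm
    (openSubgraph_adj_of (by decide) h4) (openSubgraph_adj_of (by decide) h3).symm (by decide)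

lemma conn124 {ω : Config G4} (h1 : ω x1 = true) (h2 : ω x2 = true) (h4 : ω x4 = true) :
    (openSubgraph G4 ω).Connected :=
  connected_of_path 3 0 1 2 (openSubgraph_adj_of (by decide) h4).symm
    (openSubgraph_adj_of (by decide) h1) (openSubgraph_adj_of (by decide) h2) (by decide)

lemma conn234 {ω : Config G4} (h2 : ω x2 = true) (h3 : ω x3 = true) (h4 : ω x4 = true) :
    (openSubgraph G4 ω).Connected :=
  connected_of_path 1 2 3 0 (openSubgraph_adj_of (by decide) h2)
    (openSubgraph_adj_of (by decide) h3) (openSubgraph_adj_of (by decide) h4).symm (by decide)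

lemma not_conn_cases13 {ω : Config G4} (h : ¬ (openSubgraph G4 ω).Connected) :
    (ω x1 = false ∨ ω x3 = false) ∨ (ω x2 = false ∧ ω x4 = false) := by
  by_contra hc
  push_neg at hc
  obtain ⟨⟨h1, h3⟩, h24⟩ := hc
  simp only [ne_eq, Bool.not_eq_false] at h1 h3
  cases hb2 : ω x2 with
  | true => exact h (conn123 h1 hb2 h3)
  | false => exact h (conn134 h1 h3 (Bool.not_eq_false _ |>.mp (h24 hb2)))

lemma not_conn_cases24 {ω : Config G4} (h : ¬ (openSubgraph G4 ω).Connected) :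
    (ω x2 = false ∨ ω x4 = false) ∨ (ω x1 = false ∧ ω x3 = false) := by
  by_contra hc
  push_neg at hc
  obtain ⟨⟨h2, h4⟩, h13⟩ := hc
  simp only [ne_eq, Bool.not_eq_false] at h2 h4
  cases hb1 : ω x1 with
  | true => exact h (conn124 hb1 h2 h4)
  | false => exact h (conn234 h2 (Bool.not_eq_false _ |>.mp (h13 hb1)) h4)

/-- Opposite pairs of edges in `C₄`. -/
def Opp (a b : Sym2 (Fin 4)) : Prop :=
  (a = s(0,1) ∧ b = s(2,3)) ∨ (a = s(2,3) ∧ b = s(0,1)) ∨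
  (a = s(1,2) ∧ b = s(0,3)) ∨ (a = s(0,3) ∧ b = s(1,2))

instance (a b : Sym2 (Fin 4)) : Decidable (Opp a b) := by unfold Opp; infer_instance

lemma distant_classify {F1 F2 : Set (Sym2 (Fin 4))} (h1 : F1 ⊆ G4.edgeSet)
    (h2 : F2 ⊆ G4.edgeSet) (hd : KDistant G4 1 F1 F2) :
    F1 = ∅ ∨ F2 = ∅ ∨ ∃ a b, Opp a b ∧ F1 = {a} ∧ F2 = {b} := by
  have hdisj : ∀ v : Fin 4, v ∈ endpointsOf F1 → v ∈ endpointsOf F2 → False := by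
    intro v hv1 hv2
    have := hd.2 v hv1 v hv2 SimpleGraph.Walk.nil
    simp at this
  have hshare : ∀ a ∈ F1, ∀ b ∈ F2, ∀ v : Fin 4, v ∈ a → v ∈ b → False := by
    intro a ha b hb v hva hvb
    exact hdisj v ⟨a, ha, hva⟩ ⟨b, hb, hvb⟩
  have key : ∀ a b : Sym2 (Fin 4), a ∈ G4.edgeSet → b ∈ G4.edgeSet →
      (∃ v, v ∈ a ∧ v ∈ b) ∨ Opp a b := by decide
  have hopp : ∀ a ∈ F1, ∀ b ∈ F2, Opp a b := by
    intro a ha b hb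
    rcases key a b (h1 ha) (h2 hb) with ⟨v, hva, hvb⟩ | h
    · exact absurd (hshare a ha b hb v hva hvb) (by simp)
    · exact h
  rcases Set.eq_empty_or_nonempty F1 with hF1 | ⟨a, ha⟩
  · exact Or.inl hF1
  rcases Set.eq_empty_or_nonempty F2 with hF2 | ⟨b, hb⟩
  · exact Or.inr (Or.inl hF2)
  refine Or.inr (Or.inr ⟨a, b, hopp a ha b hb, ?_, ?_⟩)
  · apply Set.eq_singleton_iff_unique_mem.mpr
    refine ⟨ha, fun a' ha' => ?_⟩
    have uniq : ∀ a a' b : Sym2 (Fin 4), Opp a' b → Opp a b → a' = a := by decide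
    exact uniq a a' b (hopp a' ha' b hb) (hopp a ha b hb)
  · apply Set.eq_singleton_iff_unique_mem.mpr
    refine ⟨hb, fun b' hb' => ?_⟩
    have uniq : ∀ a b b' : Sym2 (Fin 4), Opp a b' → Opp a b → b' = b := by decide
    exact uniq a b b' (hopp a ha b' hb') (hopp a ha b hb)

/-- A configuration given by a Boolean function on all of `Sym2 (Fin 4)`. -/
def cfg (f : Sym2 (Fin 4) → Bool) : Config G4 := fun e => f e

def ωfull : Config G4 := cfg (fun _ => true)
def ωE : Config G4 := cfg (fun e => decide (e = s(0,1)) || decide (e = s(2,3)))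
def ωa : Config G4 := cfg (fun e => decide (e = s(2,3)) || decide (e = s(0,3)))
def ωb : Config G4 := cfg (fun e => decide (e = s(0,1)) || decide (e = s(1,2)))
def ωc : Config G4 := cfg (fun e => decide (e = s(1,2)) || decide (e = s(0,3)))

lemma openSubgraph_cfg_adj (f : Sym2 (Fin 4) → Bool) (a b : Fin 4) :
    (openSubgraph G4 (cfg f)).Adj a b ↔ (G4.Adj a b ∧ f s(a,b) = true) := by
  rw [openSubgraph, SimpleGraph.fromEdgeSet_adj]
  constructor
  · rintro ⟨⟨h, hf⟩, -⟩
    exact ⟨(SimpleGraph.mem_edgeSet _).mp h, hf⟩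
  · rintro ⟨h, hf⟩
    exact ⟨⟨(SimpleGraph.mem_edgeSet _).mpr h, hf⟩, h.ne⟩

lemma not_conn_cfg (f : Sym2 (Fin 4) → Bool) (S : Set (Fin 4)) (u v : Fin 4)
    (hu : u ∈ S) (hv : v ∉ S)
    (hcl : ∀ a b : Fin 4, a ∈ S → G4.Adj a b → f s(a,b) = true → b ∈ S) :
    ¬ (openSubgraph G4 (cfg f)).Connected := by
  apply not_connected_of S u v hu hv
  intro a b ha hadj
  rw [openSubgraph_cfg_adj] at hadj
  exact hcl a b ha hadj.1 hadj.2

lemma conn_ωfull : (openSubgraph G4 ωfull).Connected :=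
  conn123 rfl rfl rfl

lemma nconn_ωE : ¬ (openSubgraph G4 ωE).Connected := by
  apply not_conn_cfg _ {x | x = 0 ∨ x = 1} 0 2 (Or.inl rfl) (by decide)
  decide

lemma nconn_ωa : ¬ (openSubgraph G4 ωa).Connected := by
  apply not_conn_cfg _ {x | x = 1} 1 0 rfl (by decide)
  decide

lemma nconn_ωb : ¬ (openSubgraph G4 ωb).Connected := by
  apply not_conn_cfg _ {x | x = 3} 3 0 rfl (by decide)
  decide

lemma nconn_ωc : ¬ (openSubgraph G4 ωc).Connected := by
  apply not_conn_cfg _ {x | x = 1 ∨ x = 2} 1 0 (Or.inl rfl) (by decide)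
  decide

noncomputable def mkMeasure (r : ℝ) : Measure (Config G4) :=
  ENNReal.ofReal (2*r-1) • Measure.dirac ωfull + ENNReal.ofReal ((1-r)*(1-r)) • Measure.dirac ωE +
  ENNReal.ofReal ((1-r)*r) • Measure.dirac ωa + ENNReal.ofReal (r*(1-r)) • Measure.dirac ωb +
  ENNReal.ofReal ((1-r)*(1-r)) • Measure.dirac ωc

open Classical in
lemma mkMeasure_apply (r : ℝ) (s : Set (Config G4)) :
    mkMeasure r s = (if ωfull ∈ s then ENNReal.ofReal (2*r-1) else 0) +
      (if ωE ∈ s then ENNReal.ofReal ((1-r)*(1-r)) else 0) +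
      (if ωa ∈ s then ENNReal.ofReal ((1-r)*r) else 0) +
      (if ωb ∈ s then ENNReal.ofReal (r*(1-r)) else 0) +
      (if ωc ∈ s then ENNReal.ofReal ((1-r)*(1-r)) else 0) := by
  have hd : ∀ (ω : Config G4) (c : ENNReal),
      (c • Measure.dirac ω) s = if ω ∈ s then c else 0 := by
    intro ω c
    rw [Measure.smul_apply, Measure.dirac_apply' _ (measAll s)]
    by_cases h : ω ∈ s
    · simp [h, Set.indicator_of_mem]
    · simp [h, Set.indicator_of_notMem]
  rw [mkMeasure]
  simp only [Measure.coe_add, Pi.add_apply, hd]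
@[simp] lemma val_ωfull_1 (h : (s(0,1) : Sym2 (Fin 4)) ∈ G4.edgeSet) : ωfull ⟨s(0,1), h⟩ = true := rfl
@[simp] lemma val_ωfull_2 (h : (s(1,2) : Sym2 (Fin 4)) ∈ G4.edgeSet) : ωfull ⟨s(1,2), h⟩ = true := rfl
@[simp] lemma val_ωfull_3 (h : (s(2,3) : Sym2 (Fin 4)) ∈ G4.edgeSet) : ωfull ⟨s(2,3), h⟩ = true := rfl
@[simp] lemma val_ωfull_4 (h : (s(0,3) : Sym2 (Fin 4)) ∈ G4.edgeSet) : ωfull ⟨s(0,3), h⟩ = true := rfl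
@[simp] lemma val_ωE_1 (h : (s(0,1) : Sym2 (Fin 4)) ∈ G4.edgeSet) : ωE ⟨s(0,1), h⟩ = true := rfl
@[simp] lemma val_ωE_2 (h : (s(1,2) : Sym2 (Fin 4)) ∈ G4.edgeSet) : ωE ⟨s(1,2), h⟩ = false := rfl
@[simp] lemma val_ωE_3 (h : (s(2,3) : Sym2 (Fin 4)) ∈ G4.edgeSet) : ωE ⟨s(2,3), h⟩ = true := rfl
@[simp] lemma val_ωE_4 (h : (s(0,3) : Sym2 (Fin 4)) ∈ G4.edgeSet) : ωE ⟨s(0,3), h⟩ = false := rfl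
@[simp] lemma val_ωa_1 (h : (s(0,1) : Sym2 (Fin 4)) ∈ G4.edgeSet) : ωa ⟨s(0,1), h⟩ = false := rfl
@[simp] lemma val_ωa_2 (h : (s(1,2) : Sym2 (Fin 4)) ∈ G4.edgeSet) : ωa ⟨s(1,2), h⟩ = false := rfl
@[simp] lemma val_ωa_3 (h : (s(2,3) : Sym2 (Fin 4)) ∈ G4.edgeSet) : ωa ⟨s(2,3), h⟩ = true := rfl
@[simp] lemma val_ωa_4 (h : (s(0,3) : Sym2 (Fin 4)) ∈ G4.edgeSet) : ωa ⟨s(0,3), h⟩ = true := rfl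
@[simp] lemma val_ωb_1 (h : (s(0,1) : Sym2 (Fin 4)) ∈ G4.edgeSet) : ωb ⟨s(0,1), h⟩ = true := rfl
@[simp] lemma val_ωb_2 (h : (s(1,2) : Sym2 (Fin 4)) ∈ G4.edgeSet) : ωb ⟨s(1,2), h⟩ = true := rfl
@[simp] lemma val_ωb_3 (h : (s(2,3) : Sym2 (Fin 4)) ∈ G4.edgeSet) : ωb ⟨s(2,3), h⟩ = false := rfl
@[simp] lemma val_ωb_4 (h : (s(0,3) : Sym2 (Fin 4)) ∈ G4.edgeSet) : ωb ⟨s(0,3), h⟩ = false := rfl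
@[simp] lemma val_ωc_1 (h : (s(0,1) : Sym2 (Fin 4)) ∈ G4.edgeSet) : ωc ⟨s(0,1), h⟩ = false := rfl
@[simp] lemma val_ωc_2 (h : (s(1,2) : Sym2 (Fin 4)) ∈ G4.edgeSet) : ωc ⟨s(1,2), h⟩ = true := rfl
@[simp] lemma val_ωc_3 (h : (s(2,3) : Sym2 (Fin 4)) ∈ G4.edgeSet) : ωc ⟨s(2,3), h⟩ = false := rfl
@[simp] lemma val_ωc_4 (h : (s(0,3) : Sym2 (Fin 4)) ∈ G4.edgeSet) : ωc ⟨s(0,3), h⟩ = true := rfl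

section mk
variable {r : ℝ} (hr2 : 1/2 ≤ r) (hr1 : r ≤ 1)

include hr2 hr1

set_option linter.unusedSectionVars false in
lemma mk_nonneg1 : (0:ℝ) ≤ 2*r-1 := by linarith
set_option linter.unusedSectionVars false in
lemma mk_nonneg2 : (0:ℝ) ≤ (1-r)*(1-r) := mul_nonneg (by linarith) (by linarith)
lemma mk_nonneg3 : (0:ℝ) ≤ (1-r)*r := mul_nonneg (by linarith) (by linarith)
lemma mk_nonneg4 : (0:ℝ) ≤ r*(1-r) := mul_nonneg (by linarith) (by linarith)

lemma mkMeasure_prob : IsProbabilityMeasure (mkMeasure r) := by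
  constructor
  rw [mkMeasure_apply]
  simp only [Set.mem_univ, if_true]
  rw [← ENNReal.ofReal_add (mk_nonneg1 hr2 hr1) (mk_nonneg2 hr2 hr1),
    ← ENNReal.ofReal_add (by nlinarith) (mk_nonneg3 hr2 hr1),
    ← ENNReal.ofReal_add (by nlinarith) (mk_nonneg4 hr2 hr1),
    ← ENNReal.ofReal_add (by nlinarith) (mk_nonneg2 hr2 hr1),
    show (2*r-1) + (1-r)*(1-r) + (1-r)*r + r*(1-r) + (1-r)*(1-r) = 1 by ring,
    ENNReal.ofReal_one]

lemma mkMeasure_marginal (e : G4.edgeSet) :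
    mkMeasure r {ω : Config G4 | ω e = true} = ENNReal.ofReal r := by
  rcases edgeSet4 e with rfl | rfl | rfl | rfl <;>
  · rw [mkMeasure_apply]
    simp only [Set.mem_setOf_eq, x1, x2, x3, x4, val_ωfull_1, val_ωfull_2, val_ωfull_3,
      val_ωfull_4, val_ωE_1, val_ωE_2, val_ωE_3, val_ωE_4, val_ωa_1, val_ωa_2, val_ωa_3,
      val_ωa_4, val_ωb_1, val_ωb_2, val_ωb_3, val_ωb_4, val_ωc_1, val_ωc_2, val_ωc_3, val_ωc_4,
      if_true, if_false, Bool.false_eq_true, add_zero, zero_add]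
    first
    | (rw [← ENNReal.ofReal_add (mk_nonneg1 hr2 hr1) (mk_nonneg2 hr2 hr1),
        ← ENNReal.ofReal_add (by nlinarith) (mk_nonneg4 hr2 hr1),
        show (2*r-1) + (1-r)*(1-r) + r*(1-r) = r by ring])
    | (rw [← ENNReal.ofReal_add (mk_nonneg1 hr2 hr1) (mk_nonneg4 hr2 hr1),
        ← ENNReal.ofReal_add (by nlinarith) (mk_nonneg2 hr2 hr1),
        show (2*r-1) + r*(1-r) + (1-r)*(1-r) = r by ring])
    | (rw [← ENNReal.ofReal_add (mk_nonneg1 hr2 hr1) (mk_nonneg2 hr2 hr1),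
        ← ENNReal.ofReal_add (by nlinarith) (mk_nonneg3 hr2 hr1),
        show (2*r-1) + (1-r)*(1-r) + (1-r)*r = r by ring])
    | (rw [← ENNReal.ofReal_add (mk_nonneg1 hr2 hr1) (mk_nonneg3 hr2 hr1),
        ← ENNReal.ofReal_add (by nlinarith) (mk_nonneg2 hr2 hr1),
        show (2*r-1) + (1-r)*r + (1-r)*(1-r) = r by ring])

omit hr2 hr1 in
lemma mkMeasure_conn :
    mkMeasure r {ω : Config G4 | (openSubgraph G4 ω).Connected} = ENNReal.ofReal (2*r-1) := by
  rw [mkMeasure_apply]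
  rw [if_pos (show ωfull ∈ {ω : Config G4 | (openSubgraph G4 ω).Connected} from conn_ωfull), if_neg (show ωE ∉ {ω : Config G4 | (openSubgraph G4 ω).Connected} from nconn_ωE),
    if_neg (show ωa ∉ {ω : Config G4 | (openSubgraph G4 ω).Connected} from nconn_ωa), if_neg (show ωb ∉ {ω : Config G4 | (openSubgraph G4 ω).Connected} from nconn_ωb),
    if_neg (show ωc ∉ {ω : Config G4 | (openSubgraph G4 ω).Connected} from nconn_ωc)]
  simp

lemma mkMeasure_indep : KIndepMeasure G4 1 (mkMeasure r) := by
  haveI := mkMeasure_prob hr2 hr1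
  have hAB : (0:ℝ) ≤ 2*r-1 + (1-r)*(1-r) := by nlinarith
  have hAD : (0:ℝ) ≤ 2*r-1 + r*(1-r) := by nlinarith
  have hAC : (0:ℝ) ≤ 2*r-1 + (1-r)*r := by nlinarith
  intro F1 F2 hF1 hF2 hd
  rcases distant_classify hF1 hF2 hd with rfl | rfl | ⟨a, b, hopp, rfl, rfl⟩
  · rw [cylinderSigma_empty]
    exact ProbabilityTheory.indep_bot_left _
  · rw [cylinderSigma_empty]
    exact ProbabilityTheory.indep_bot_right _
  · have hae : a ∈ G4.edgeSet := hF1 rfl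
    have hbe : b ∈ G4.edgeSet := hF2 rfl
    rw [cylinderSigma_singleton G4 hae, cylinderSigma_singleton G4 hbe]
    apply ProbabilityTheory.IndepSets.indep' (fun s _ => measAll s) (fun s _ => measAll s)
      (IsPiSystem.singleton _) (IsPiSystem.singleton _)
    rw [ProbabilityTheory.indepSets_singleton_iff]
    rcases hopp with ⟨rfl, rfl⟩ | ⟨rfl, rfl⟩ | ⟨rfl, rfl⟩ | ⟨rfl, rfl⟩
    · rw [mkMeasure_apply, mkMeasure_apply, mkMeasure_apply]
      simp only [Set.mem_inter_iff, Set.mem_setOf_eq, val_ωfull_1, val_ωfull_2, val_ωfull_3,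
      val_ωfull_4, val_ωE_1, val_ωE_2, val_ωE_3, val_ωE_4, val_ωa_1, val_ωa_2, val_ωa_3,
      val_ωa_4, val_ωb_1, val_ωb_2, val_ωb_3, val_ωb_4, val_ωc_1, val_ωc_2, val_ωc_3, val_ωc_4,
      Bool.false_eq_true, if_true, if_false, and_true, and_false, true_and, false_and,
      add_zero, zero_add]
      rw [← ENNReal.ofReal_add (mk_nonneg1 hr2 hr1) (mk_nonneg2 hr2 hr1),
        ← ENNReal.ofReal_add hAB (mk_nonneg4 hr2 hr1),
        ← ENNReal.ofReal_add hAB (mk_nonneg3 hr2 hr1),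
        ← ENNReal.ofReal_mul (by nlinarith)]
      congr 1
      ring
    · rw [mkMeasure_apply, mkMeasure_apply, mkMeasure_apply]
      simp only [Set.mem_inter_iff, Set.mem_setOf_eq, val_ωfull_1, val_ωfull_2, val_ωfull_3,
      val_ωfull_4, val_ωE_1, val_ωE_2, val_ωE_3, val_ωE_4, val_ωa_1, val_ωa_2, val_ωa_3,
      val_ωa_4, val_ωb_1, val_ωb_2, val_ωb_3, val_ωb_4, val_ωc_1, val_ωc_2, val_ωc_3, val_ωc_4,
      Bool.false_eq_true, if_true, if_false, and_true, and_false, true_and, false_and,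
      add_zero, zero_add]
      rw [← ENNReal.ofReal_add (mk_nonneg1 hr2 hr1) (mk_nonneg2 hr2 hr1),
        ← ENNReal.ofReal_add hAB (mk_nonneg4 hr2 hr1),
        ← ENNReal.ofReal_add hAB (mk_nonneg3 hr2 hr1),
        ← ENNReal.ofReal_mul (by nlinarith)]
      congr 1
      ring
    · rw [mkMeasure_apply, mkMeasure_apply, mkMeasure_apply]
      simp only [Set.mem_inter_iff, Set.mem_setOf_eq, val_ωfull_1, val_ωfull_2, val_ωfull_3,
      val_ωfull_4, val_ωE_1, val_ωE_2, val_ωE_3, val_ωE_4, val_ωa_1, val_ωa_2, val_ωa_3,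
      val_ωa_4, val_ωb_1, val_ωb_2, val_ωb_3, val_ωb_4, val_ωc_1, val_ωc_2, val_ωc_3, val_ωc_4,
      Bool.false_eq_true, if_true, if_false, and_true, and_false, true_and, false_and,
      add_zero, zero_add]
      rw [← ENNReal.ofReal_add (mk_nonneg1 hr2 hr1) (mk_nonneg2 hr2 hr1),
        ← ENNReal.ofReal_add (mk_nonneg1 hr2 hr1) (mk_nonneg4 hr2 hr1),
        ← ENNReal.ofReal_add hAD (mk_nonneg2 hr2 hr1),
        ← ENNReal.ofReal_add (mk_nonneg1 hr2 hr1) (mk_nonneg3 hr2 hr1),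
        ← ENNReal.ofReal_add hAC (mk_nonneg2 hr2 hr1),
        ← ENNReal.ofReal_mul (by nlinarith)]
      congr 1
      ring
    · rw [mkMeasure_apply, mkMeasure_apply, mkMeasure_apply]
      simp only [Set.mem_inter_iff, Set.mem_setOf_eq, val_ωfull_1, val_ωfull_2, val_ωfull_3,
      val_ωfull_4, val_ωE_1, val_ωE_2, val_ωE_3, val_ωE_4, val_ωa_1, val_ωa_2, val_ωa_3,
      val_ωa_4, val_ωb_1, val_ωb_2, val_ωb_3, val_ωb_4, val_ωc_1, val_ωc_2, val_ωc_3, val_ωc_4,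
      Bool.false_eq_true, if_true, if_false, and_true, and_false, true_and, false_and,
      add_zero, zero_add]
      rw [← ENNReal.ofReal_add (mk_nonneg1 hr2 hr1) (mk_nonneg2 hr2 hr1),
        ← ENNReal.ofReal_add (mk_nonneg1 hr2 hr1) (mk_nonneg4 hr2 hr1),
        ← ENNReal.ofReal_add hAD (mk_nonneg2 hr2 hr1),
        ← ENNReal.ofReal_add (mk_nonneg1 hr2 hr1) (mk_nonneg3 hr2 hr1),
        ← ENNReal.ofReal_add hAC (mk_nonneg2 hr2 hr1),
        ← ENNReal.ofReal_mul (by nlinarith)]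
      congr 1
      ring

lemma mkMeasure_mem {p : ℝ} (hp : p ≤ r) : mkMeasure r ∈ MGe G4 1 p :=
  ⟨mkMeasure_prob hr2 hr1, mkMeasure_indep hr2 hr1, fun e => by
    rw [mkMeasure_marginal hr2 hr1 e]
    exact ENNReal.ofReal_le_ofReal hp⟩

end mk

lemma lower_bound {p : ℝ} (hp2 : 1/2 ≤ p) (hp1 : p ≤ 1) {μ : Measure (Config G4)}
    (hμ : μ ∈ MGe G4 1 p) :
    ENNReal.ofReal (2*p-1) ≤ μ {ω : Config G4 | (openSubgraph G4 ω).Connected} := by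
  obtain ⟨hprob, hind, hmarg⟩ := hμ
  haveI := hprob
  have hA : ∀ e : G4.edgeSet, μ {ω : Config G4 | ω e = false} ≤ ENNReal.ofReal (1-p) := by
    intro e
    have hc : {ω : Config G4 | ω e = false} = {ω : Config G4 | ω e = true}ᶜ := by
      ext ω
      simp [Bool.not_eq_true]
    rw [hc, prob_compl_eq_one_sub (measAll _)]
    have h1 : (1:ENNReal) - μ {ω : Config G4 | ω e = true} ≤ 1 - ENNReal.ofReal p :=
      tsub_le_tsub_left (hmarg e) 1
    have h2 : (1:ENNReal) - ENNReal.ofReal p = ENNReal.ofReal (1-p) := by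
      rw [ENNReal.ofReal_sub _ (by linarith : (0:ℝ) ≤ p), ENNReal.ofReal_one]
    rw [← h2]
    exact h1
  set Conn := {ω : Config G4 | (openSubgraph G4 ω).Connected} with hConn
  set A1 := {ω : Config G4 | ω x1 = false}
  set A2 := {ω : Config G4 | ω x2 = false}
  set A3 := {ω : Config G4 | ω x3 = false}
  set A4 := {ω : Config G4 | ω x4 = false}
  have hD13 : Connᶜ ⊆ (A1 ∪ A3) ∪ (A2 ∩ A4) := by
    intro ω hω
    rcases not_conn_cases13 hω with (h | h) | ⟨h, h'⟩
    · exact Or.inl (Or.inl h)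
    · exact Or.inl (Or.inr h)
    · exact Or.inr ⟨h, h'⟩
  have hD24 : Connᶜ ⊆ (A2 ∪ A4) ∪ (A1 ∩ A3) := by
    intro ω hω
    rcases not_conn_cases24 hω with (h | h) | ⟨h, h'⟩
    · exact Or.inl (Or.inl h)
    · exact Or.inl (Or.inr h)
    · exact Or.inr ⟨h, h'⟩
  have key : μ Connᶜ + μ Connᶜ ≤ μ A1 + μ A3 + (μ A2 + μ A4) := by
    calc μ Connᶜ + μ Connᶜ
        ≤ (μ (A1 ∪ A3) + μ (A2 ∩ A4)) + (μ (A2 ∪ A4) + μ (A1 ∩ A3)) :=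
          add_le_add ((measure_mono hD13).trans (measure_union_le _ _))
            ((measure_mono hD24).trans (measure_union_le _ _))
      _ = (μ (A1 ∪ A3) + μ (A1 ∩ A3)) + (μ (A2 ∪ A4) + μ (A2 ∩ A4)) := by ring
      _ = μ A1 + μ A3 + (μ A2 + μ A4) := by
          rw [measure_union_add_inter _ (measAll _), measure_union_add_inter _ (measAll _)]
  have h4 : μ A1 + μ A3 + (μ A2 + μ A4)
      ≤ ENNReal.ofReal (2-2*p) + ENNReal.ofReal (2-2*p) := by
    have hsum : ENNReal.ofReal (1-p) + ENNReal.ofReal (1-p) = ENNReal.ofReal (2-2*p) := by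
      rw [← ENNReal.ofReal_add (by linarith) (by linarith)]
      ring_nf
    calc μ A1 + μ A3 + (μ A2 + μ A4)
        ≤ (ENNReal.ofReal (1-p) + ENNReal.ofReal (1-p)) +
            (ENNReal.ofReal (1-p) + ENNReal.ofReal (1-p)) :=
          add_le_add (add_le_add (hA x1) (hA x3)) (add_le_add (hA x2) (hA x4))
      _ = ENNReal.ofReal (2-2*p) + ENNReal.ofReal (2-2*p) := by rw [hsum]
  have hDle : μ Connᶜ ≤ ENNReal.ofReal (2-2*p) := by
    by_contra hlt
    push_neg at hlt
    exact absurd (key.trans h4) (not_le.mpr (ENNReal.add_lt_add hlt hlt))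
  have hcompl : μ Conn + μ Connᶜ = 1 := by
    rw [measure_add_measure_compl (measAll _), measure_univ]
  have hone : (1:ENNReal) ≤ μ Conn + ENNReal.ofReal (2-2*p) := by
    rw [← hcompl]
    exact add_le_add le_rfl hDle
  have hX : ENNReal.ofReal (2*p-1) + ENNReal.ofReal (2-2*p) = 1 := by
    rw [← ENNReal.ofReal_add (by linarith) (by linarith),
      show (2*p-1) + (2-2*p) = 1 by ring, ENNReal.ofReal_one]
  exact (ENNReal.add_le_add_iff_right ENNReal.ofReal_ne_top).mp (hX.le.trans hone)

theorem connFun_cycleGraph_four (p : ℝ) (hp : p ∈ Set.Icc (0:ℝ) 1) :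
    (1 / 2 ≤ p → connFun (SimpleGraph.cycleGraph 4) 1 p = 2 * p - 1) ∧
    (p ≤ 1 / 2 → connFun (SimpleGraph.cycleGraph 4) 1 p = 0) := by
  constructor
  · intro hp2
    have hmem : (2*p-1) ∈ {x | ∃ μ ∈ MGe (SimpleGraph.cycleGraph 4) 1 p,
        x = (μ {ω | (openSubgraph (SimpleGraph.cycleGraph 4) ω).Connected}).toReal} := by
      refine ⟨mkMeasure p, mkMeasure_mem hp2 hp.2 le_rfl, ?_⟩
      rw [mkMeasure_conn, ENNReal.toReal_ofReal (by linarith)]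
    have hlb : ∀ x ∈ {x | ∃ μ ∈ MGe (SimpleGraph.cycleGraph 4) 1 p,
        x = (μ {ω | (openSubgraph (SimpleGraph.cycleGraph 4) ω).Connected}).toReal},
        2*p-1 ≤ x := by
      rintro x ⟨μ, hμ, rfl⟩
      haveI := hμ.1
      have hle := lower_bound hp2 hp.2 hμ
      have ht := ENNReal.toReal_mono (measure_ne_top μ _) hle
      rwa [ENNReal.toReal_ofReal (by linarith)] at ht
    rw [connFun]
    exact le_antisymm (csInf_le ⟨2*p-1, hlb⟩ hmem) (le_csInf ⟨_, hmem⟩ hlb)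
  · intro hp2
    have hmem : (0:ℝ) ∈ {x | ∃ μ ∈ MGe (SimpleGraph.cycleGraph 4) 1 p,
        x = (μ {ω | (openSubgraph (SimpleGraph.cycleGraph 4) ω).Connected}).toReal} := by
      refine ⟨mkMeasure (1/2), mkMeasure_mem le_rfl (by norm_num) hp2, ?_⟩
      rw [mkMeasure_conn]
      norm_num
    have hlb : ∀ x ∈ {x | ∃ μ ∈ MGe (SimpleGraph.cycleGraph 4) 1 p,
        x = (μ {ω | (openSubgraph (SimpleGraph.cycleGraph 4) ω).Connected}).toReal},
        0 ≤ x := by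
      rintro x ⟨μ, hμ, rfl⟩
      exact ENNReal.toReal_nonneg
    rw [connFun]
    exact le_antisymm (csInf_le ⟨0, hlb⟩ hmem) (le_csInf ⟨0, hmem⟩ hlb)

end OneIndep
end
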